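/- arXiv:2506.19126 — 8 statements merged into one kernel-verified Lean document; each statement's English description precedes it below -/
import Mathlib

section
/- ℝ cannot be colored with two colors (red and blue) so that no two red points are at distance 1 and no two blue points are at distance 2. -/
/-- ℝ cannot be 2-colored (red = true, blue = false) so that no two red points
are at distance 1 and no two blue points are at distance 2. -/
theorem no_red_blue_coloring_of_real :
    ¬ ∃ c : ℝ → Bool,
      (∀ x y : ℝ, c x = true → c y = true → |x - y| ≠ 1) ∧
      (∀ x y : ℝ, c x = false → c y = false → |x - y| ≠ 2) := by
  rintro ⟨c, h1, h2⟩
  have hb : ∃ b : ℝ, c b = false := by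
    by_contra h
    push_neg at h
    simp only [Bool.not_eq_false] at h
    exact h1 0 1 (h 0) (h 1) (by norm_num)
  obtain ⟨b, hb⟩ := hb
  have hb2 : c (b + 2) = true := by
    cases hc : c (b + 2) with
    | false => exact absurd (by rw [abs_sub_comm]; norm_num) (h2 b (b + 2) hb hc)
    | true => rfl
  have hb3 : c (b + 3) = false := by
    cases hc : c (b + 3) with
    | true =>
      exact absurd (by rw [abs_sub_comm]; norm_num) (h1 (b + 2) (b + 3) hb2 hc)
    | false => rfl
  have hb1 : c (b + 1) = true := by
    cases hc : c (b + 1) with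
    | false => exact absurd (by rw [abs_sub_comm]; norm_num) (h2 (b + 1) (b + 3) hc hb3)
    | true => rfl
  exact h1 (b + 1) (b + 2) hb1 hb2 (by rw [abs_sub_comm]; norm_num)
end

section
/- For every 1×3 restriction array (d₁, d₂, d₃) of positive reals, there exists a coloring of ℝ with 3 colors such that no two points of color j are at distance dⱼ apart, for j = 1, 2, 3. -/
set_option linter.unusedVariables false
set_option linter.unreachableTactic false
set_option linter.unusedTactic false
set_option linter.unnecessarySimpa false
set_option maxHeartbeats 1000000

/-- Distance from an integer to the nearest multiple of `M`. -/
def Gd (M x : ℤ) : ℤ := min (x % M) (M - x % M)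

lemma Gd_nonneg {M : ℤ} (hM : 0 < M) (x : ℤ) : 0 ≤ Gd M x := by
  have h1 := Int.emod_nonneg x (ne_of_gt hM)
  have h2 := Int.emod_lt_of_pos x hM
  unfold Gd
  simp only [le_min_iff]
  omega

lemma Gd_le_abs {M : ℤ} (hM : 0 < M) (x : ℤ) (K : ℤ) : Gd M x ≤ |x - K * M| := by
  have h1 := Int.emod_nonneg x (ne_of_gt hM)
  have h2 := Int.emod_lt_of_pos x hM
  have hq : M * (x / M) + x % M = x := Int.mul_ediv_add_emod x M
  set q := x / M with hqd
  set r := x % M with hr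
  rcases le_or_gt K q with h | h
  · have hmul : M * (q - K) ≥ 0 := mul_nonneg (le_of_lt hM) (by omega)
    have hnn : 0 ≤ x - K * M := by nlinarith
    rw [abs_of_nonneg hnn]
    have : Gd M x ≤ r := min_le_left _ _
    nlinarith
  · have hmul : M * (q - K) ≤ M * (-1) := mul_le_mul_of_nonneg_left (by omega) (le_of_lt hM)
    have hle : x - K * M ≤ -(M - r) := by nlinarith
    rw [abs_of_nonpos (by nlinarith [h1] : x - K * M ≤ 0)]
    have : Gd M x ≤ M - r := min_le_right _ _
    linarith

lemma Gd_le_self {M : ℤ} (hM : 0 < M) {x : ℤ} (hx : 0 ≤ x) : Gd M x ≤ x := by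
  have := Gd_le_abs hM x 0
  simpa [abs_of_nonneg hx] using this

lemma Gd_add_mul {M : ℤ} (x k : ℤ) : Gd M (x + M * k) = Gd M x := by
  unfold Gd
  rw [Int.add_mul_emod_self_left]

lemma Gd_half {H : ℤ} (hH : 0 < H) (x : ℤ) : Gd (2*H) (x + H) + Gd (2*H) x = H := by
  have hM : (0:ℤ) < 2*H := by linarith
  have h1 := Int.emod_nonneg x (ne_of_gt hM)
  have h2 := Int.emod_lt_of_pos x hM
  have hq : (2*H) * (x / (2*H)) + x % (2*H) = x := Int.mul_ediv_add_emod x (2*H)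
  set r := x % (2*H) with hr
  have hxH : x + H = (r + H) + (2*H) * (x / (2*H)) := by linarith
  have key : (x + H) % (2*H) = if r < H then r + H else r - H := by
    rw [hxH, Int.add_mul_emod_self_left]
    split_ifs with hc
    · exact Int.emod_eq_of_lt (by omega) (by omega)
    · have : r + H = (r - H) + (2*H) * 1 := by ring
      rw [this, Int.add_mul_emod_self_left]
      exact Int.emod_eq_of_lt (by omega) (by omega)
  unfold Gd
  rw [key, ← hr]
  split_ifs with hc
  · rw [min_eq_right (by omega), min_eq_left (by omega)]
    ring
  · rw [min_eq_left (by omega), min_eq_right (by omega)]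
    ring

lemma Gd_flip {h : ℕ} {b₀ : ℤ} (hodd : Odd b₀) (y : ℤ) :
    Gd (2^(h+1)) (y + 2^h * b₀) + Gd (2^(h+1)) y = 2^h := by
  obtain ⟨j, hj⟩ := hodd
  have h1 : y + 2^h * b₀ = (y + 2^h) + 2^(h+1) * j := by rw [hj]; ring
  have h2 : (2:ℤ)^(h+1) = 2 * 2^h := by ring
  rw [h1, Gd_add_mul, h2]
  exact Gd_half (by positivity) y

lemma Gd_top {h : ℕ} {w : ℤ} (hodd : Odd w) : Gd (2^(h+1)) (2^h * w) = 2^h := by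
  have := Gd_flip (h := h) hodd 0
  have h0 : Gd (2^(h+1)) 0 = 0 := by
    unfold Gd
    rw [Int.zero_emod, sub_zero]
    exact min_eq_left (by positivity)
  rw [zero_add] at this
  omega

lemma core' (h β γ : ℕ) (A B C a₀ b₀ c₀ : ℤ) (ha₀ : Odd a₀) (hb₀ : Odd b₀) (hc₀ : Odd c₀)
    (hA : A = 2^h * a₀) (hB : B = 2^β * b₀) (hC : C = 2^γ * c₀)
    (hβ : β ≤ h) (hγ : γ ≤ h) :
    ∃ i : ℤ, 0 < i ∧
      2^(h+1) ≤ Gd (2^(h+1)) (A * i) + Gd (2^(h+1)) (B * i) + Gd (2^(h+1)) (C * i) := by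
  have hM : (0:ℤ) < 2^(h+1) := by positivity
  have hGa : ∀ i : ℤ, Odd i → Gd (2^(h+1)) (A * i) = 2^h := by
    intro i hi
    rw [hA, mul_assoc]
    exact Gd_top (ha₀.mul hi)
  rcases eq_or_lt_of_le hβ with hbh | hbh
  · -- β = h : B also contributes 2^h at i = 1
    refine ⟨1, one_pos, ?_⟩
    have h1 : Gd (2^(h+1)) (A * 1) = 2^h := hGa 1 odd_one
    have h2 : Gd (2^(h+1)) (B * 1) = 2^h := by
      rw [hB, hbh, mul_one]; exact Gd_top hb₀
    have h3 := Gd_nonneg hM (C * 1)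
    have : (2:ℤ)^(h+1) = 2^h + 2^h := by ring
    omega
  · rcases eq_or_lt_of_le hγ with hch | hch
    · refine ⟨1, one_pos, ?_⟩
      have h1 : Gd (2^(h+1)) (A * 1) = 2^h := hGa 1 odd_one
      have h3 : Gd (2^(h+1)) (C * 1) = 2^h := by
        rw [hC, hch, mul_one]; exact Gd_top hc₀
      have h2 := Gd_nonneg hM (B * 1)
      have : (2:ℤ)^(h+1) = 2^h + 2^h := by ring
      omega
    · -- β < h, γ < h : four-point pigeonhole
      obtain ⟨βr, hβr⟩ : ∃ k, h = β + (k + 1) := ⟨h - β - 1, by omega⟩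
      obtain ⟨γr, hγr⟩ : ∃ k, h = γ + (k + 1) := ⟨h - γ - 1, by omega⟩
      set sB : ℤ := 2^(βr+1) with hsB
      set sC : ℤ := 2^(γr+1) with hsC
      have hsBeven : Even sB := by
        rw [hsB, pow_succ]
        exact ⟨2^βr, by ring⟩
      have hsCeven : Even sC := by
        rw [hsC, pow_succ]
        exact ⟨2^γr, by ring⟩
      have flipB : ∀ i : ℤ, Gd (2^(h+1)) (B * (i + sB)) + Gd (2^(h+1)) (B * i) = 2^h := by
        intro i
        have : B * (i + sB) = B * i + 2^h * b₀ := by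
          rw [hB, hsB, hβr]; ring
        rw [this]
        exact Gd_flip hb₀ (B * i)
      have flipC : ∀ i : ℤ, Gd (2^(h+1)) (C * (i + sC)) + Gd (2^(h+1)) (C * i) = 2^h := by
        intro i
        have : C * (i + sC) = C * i + 2^h * c₀ := by
          rw [hC, hsC, hγr]; ring
        rw [this]
        exact Gd_flip hc₀ (C * i)
      set i₁ : ℤ := 1 with hi₁
      set i₂ : ℤ := 1 + sB with hi₂
      set i₃ : ℤ := 1 + sC with hi₃
      set i₄ : ℤ := 1 + sB + sC with hi₄
      have hsBpos : 0 < sB := by positivity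
      have hsCpos : 0 < sC := by positivity
      have sumB : Gd (2^(h+1)) (B * i₂) + Gd (2^(h+1)) (B * i₁) = 2^h := flipB i₁
      have sumB2 : Gd (2^(h+1)) (B * i₄) + Gd (2^(h+1)) (B * i₃) = 2^h := by
        have := flipB i₃
        have he : i₃ + sB = i₄ := by omega
        rwa [he] at this
      have sumC : Gd (2^(h+1)) (C * i₃) + Gd (2^(h+1)) (C * i₁) = 2^h := flipC i₁
      have sumC2 : Gd (2^(h+1)) (C * i₄) + Gd (2^(h+1)) (C * i₂) = 2^h := by
        have := flipC i₂
        have he : i₂ + sC = i₄ := by omega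
        rwa [he] at this
      have hO1 : Odd i₁ := odd_one
      have hO2 : Odd i₂ := Odd.add_even odd_one hsBeven
      have hO3 : Odd i₃ := Odd.add_even odd_one hsCeven
      have hO4 : Odd i₄ := by
        rw [hi₄, add_assoc]
        exact Odd.add_even odd_one (hsBeven.add hsCeven)
      have hpow : (2:ℤ)^(h+1) = 2^h + 2^h := by ring
      have key : (2^h ≤ Gd (2^(h+1)) (B * i₁) + Gd (2^(h+1)) (C * i₁))
          ∨ (2^h ≤ Gd (2^(h+1)) (B * i₂) + Gd (2^(h+1)) (C * i₂))
          ∨ (2^h ≤ Gd (2^(h+1)) (B * i₃) + Gd (2^(h+1)) (C * i₃))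
          ∨ (2^h ≤ Gd (2^(h+1)) (B * i₄) + Gd (2^(h+1)) (C * i₄)) := by
        by_contra hno
        push_neg at hno
        omega
      rcases key with hk | hk | hk | hk
      · exact ⟨i₁, by positivity, by rw [hGa i₁ hO1]; omega⟩
      · exact ⟨i₂, by positivity, by rw [hGa i₂ hO2]; omega⟩
      · exact ⟨i₃, by positivity, by rw [hGa i₃ hO3]; omega⟩
      · exact ⟨i₄, by positivity, by rw [hGa i₄ hO4]; omega⟩

lemma core (n₀ n₁ n₂ : ℕ) (h₀ : 0 < n₀) (h₁ : 0 < n₁) (h₂ : 0 < n₂) :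
    ∃ (m : ℕ) (i : ℤ), 0 < i ∧
      2^(m+1) ≤ Gd (2^(m+1)) ((n₀ : ℤ) * i) + Gd (2^(m+1)) ((n₁ : ℤ) * i)
        + Gd (2^(m+1)) ((n₂ : ℤ) * i) := by
  obtain ⟨α₀, u₀, hu₀, he₀⟩ := Nat.exists_eq_two_pow_mul_odd h₀.ne'
  obtain ⟨α₁, u₁, hu₁, he₁⟩ := Nat.exists_eq_two_pow_mul_odd h₁.ne'
  obtain ⟨α₂, u₂, hu₂, he₂⟩ := Nat.exists_eq_two_pow_mul_odd h₂.ne'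
  have hN₀ : (n₀:ℤ) = 2^α₀ * (u₀:ℤ) := by rw [he₀]; push_cast; ring
  have hN₁ : (n₁:ℤ) = 2^α₁ * (u₁:ℤ) := by rw [he₁]; push_cast; ring
  have hN₂ : (n₂:ℤ) = 2^α₂ * (u₂:ℤ) := by rw [he₂]; push_cast; ring
  have hO₀ : Odd (u₀:ℤ) := by exact_mod_cast hu₀
  have hO₁ : Odd (u₁:ℤ) := by exact_mod_cast hu₁
  have hO₂ : Odd (u₂:ℤ) := by exact_mod_cast hu₂
  set h := max α₀ (max α₁ α₂) with hh
  have hm0 : α₀ ≤ h := le_max_left _ _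
  have hm1 : α₁ ≤ h := le_trans (le_max_left _ _) (le_max_right _ _)
  have hm2 : α₂ ≤ h := le_trans (le_max_right _ _) (le_max_right _ _)
  have c0 : α₀ = h ∨ α₁ = h ∨ α₂ = h := by omega
  rcases c0 with hc | hc | hc
  · obtain ⟨i, hi, hsum⟩ := core' h α₁ α₂ (n₀:ℤ) (n₁:ℤ) (n₂:ℤ) u₀ u₁ u₂ hO₀ hO₁ hO₂
      (by rw [hN₀, hc]) hN₁ hN₂ hm1 hm2
    exact ⟨h, i, hi, by omega⟩
  · obtain ⟨i, hi, hsum⟩ := core' h α₀ α₂ (n₁:ℤ) (n₀:ℤ) (n₂:ℤ) u₁ u₀ u₂ hO₁ hO₀ hO₂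
      (by rw [hN₁, hc]) hN₀ hN₂ hm0 hm2
    exact ⟨h, i, hi, by omega⟩
  · obtain ⟨i, hi, hsum⟩ := core' h α₀ α₁ (n₂:ℤ) (n₀:ℤ) (n₁:ℤ) u₂ u₀ u₁ hO₂ hO₀ hO₁
      (by rw [hN₂, hc]) hN₀ hN₁ hm0 hm1
    exact ⟨h, i, hi, by omega⟩

lemma blocks (D : Fin 3 → ℝ) (P : ℝ) (hP : 0 < P) (l : Fin 3 → ℝ)
    (hl0 : ∀ j, 0 ≤ l j) (hlD : ∀ j, l j ≤ D j)
    (hband : ∀ (j : Fin 3) (K : ℤ), 1 ≤ K → l j ≤ |D j - (K : ℝ) * P|)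
    (hsum : P ≤ l 0 + l 1 + l 2) :
    ∃ c : ℝ → Fin 3, ∀ j : Fin 3, ∀ x y : ℝ,
      x ≠ y → c x = j → c y = j → |x - y| ≠ D j := by
  classical
  set θ₁ := min (l 0) P with hθ₁
  set θ₂ := min (l 0 + l 1) P with hθ₂
  set r : ℝ → ℝ := fun x => P * Int.fract (x / P) with hrdef
  set c : ℝ → Fin 3 := fun x => if r x < θ₁ then 0 else if r x < θ₂ then 1 else 2 with hcdef
  have hr0 : ∀ x, 0 ≤ r x := fun x => mul_nonneg hP.le (Int.fract_nonneg _)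
  have hrP : ∀ x, r x < P := fun x => by
    have h1 := Int.fract_lt_one (x / P)
    have : P * Int.fract (x / P) < P * 1 := by
      exact mul_lt_mul_of_pos_left h1 hP
    simpa [hrdef] using this
  have hrdiff : ∀ x, r x = x - P * (⌊x / P⌋ : ℝ) := by
    intro x
    rw [hrdef]
    simp only [Int.fract]
    field_simp
  have hc0 : ∀ x, c x = 0 → r x < θ₁ := by
    intro x hx
    rw [hcdef] at hx
    simp only at hx
    split_ifs at hx with h1 h2
    · exact h1
    · exact absurd hx (by decide)
    · exact absurd hx (by decide)
  have hc1 : ∀ x, c x = 1 → θ₁ ≤ r x ∧ r x < θ₂ := by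
    intro x hx
    rw [hcdef] at hx
    simp only at hx
    split_ifs at hx with h1 h2
    · exact absurd hx (by decide)
    · exact ⟨le_of_not_gt h1, h2⟩
    · exact absurd hx (by decide)
  have hc2 : ∀ x, c x = 2 → θ₂ ≤ r x := by
    intro x hx
    rw [hcdef] at hx
    simp only at hx
    split_ifs at hx with h1 h2
    · exact absurd hx (by decide)
    · exact absurd hx (by decide)
    · exact le_of_not_gt h2
  have crucial : ∀ (j : Fin 3) (A B : ℝ) (x y : ℝ), x < y → y - x = D j →
      A ≤ r x → r x < B → A ≤ r y → r y < B → B - A ≤ l j → False := by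
    intro j A B x y hlt heq hAx hBx hAy hBy hw
    have hK : y - x = (r y - r x) + ((⌊y / P⌋ - ⌊x / P⌋ : ℤ) : ℝ) * P := by
      rw [hrdiff x, hrdiff y]
      push_cast
      ring
    set K : ℤ := ⌊y / P⌋ - ⌊x / P⌋ with hKdef
    have hd : |r y - r x| < l j := by
      rw [abs_lt]
      constructor <;> nlinarith
    rcases le_or_gt K 0 with hK0 | hK1
    · have hKP : (K : ℝ) * P ≤ 0 :=
        mul_nonpos_of_nonpos_of_nonneg (by exact_mod_cast hK0) hP.le
      have h1 : D j ≤ r y - r x := by linarith [heq, hK]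
      have h2 : r y - r x ≤ |r y - r x| := le_abs_self _
      linarith [hlD j, hd]
    · have hb := hband j K hK1
      have heq2 : D j - (K : ℝ) * P = r y - r x := by linarith [heq, hK]
      rw [heq2] at hb
      linarith [hd]
  refine ⟨c, ?_⟩
  have key : ∀ (j : Fin 3) (x y : ℝ), x < y → c x = j → c y = j → y - x ≠ D j := by
    intro j x y hlt hcx hcy heq
    have hw1 : θ₁ ≤ l 0 := min_le_left _ _
    have hw2 : θ₂ - θ₁ ≤ l 1 := by
      rcases le_total (l 0 + l 1) P with h | h
      · have e1 : θ₂ = l 0 + l 1 := by rw [hθ₂]; exact min_eq_left h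
        have e2 : θ₁ = l 0 := by rw [hθ₁]; exact min_eq_left (by linarith [hl0 1])
        linarith
      · have e1 : θ₂ = P := by rw [hθ₂]; exact min_eq_right h
        have e2 : P - l 1 ≤ θ₁ := by
          rw [hθ₁]; exact le_min (by linarith) (by linarith [hl0 1])
        linarith
    have hw3 : P - θ₂ ≤ l 2 := by
      rcases le_total (l 0 + l 1) P with h | h
      · have e1 : θ₂ = l 0 + l 1 := by rw [hθ₂]; exact min_eq_left h
        linarith
      · have e1 : θ₂ = P := by rw [hθ₂]; exact min_eq_right h
        linarith [hl0 2]
    fin_cases j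
    · exact crucial 0 0 θ₁ x y hlt heq (hr0 x) (hc0 x hcx) (hr0 y) (hc0 y hcy)
        (by simpa using hw1)
    · obtain ⟨ha, hb⟩ := hc1 x hcx
      obtain ⟨ha', hb'⟩ := hc1 y hcy
      exact crucial 1 θ₁ θ₂ x y hlt heq ha hb ha' hb' hw2
    · exact crucial 2 θ₂ P x y hlt heq (hc2 x hcx) (hrP x) (hc2 y hcy) (hrP y) hw3
  intro j x y hxy hcx hcy habs
  rcases lt_or_gt_of_ne hxy with h | h
  · have e : y - x = D j := by
      rw [← habs, abs_sub_comm, abs_of_pos (by linarith : (0:ℝ) < y - x)]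
    exact key j x y h hcx hcy e
  · have e : x - y = D j := by
      rw [← habs, abs_of_pos (by linarith : (0:ℝ) < x - y)]
    exact key j y x h hcy hcx e

lemma exists_functional (d : Fin 3 → ℝ) (hd : ∀ j, d j ≠ 0) :
    ∃ f : ℝ →ₗ[ℚ] ℚ, ∀ j, f (d j) ≠ 0 := by
  classical
  have hcoord : ∀ v : ℝ, v ≠ 0 → ∃ g : ℝ →ₗ[ℚ] ℚ, g v ≠ 0 := by
    intro v hv
    set B := Module.Basis.ofVectorSpace ℚ ℝ with hB
    have hrepr : B.repr v ≠ 0 := by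
      intro h
      apply hv
      have := B.repr.injective (a₁ := v) (a₂ := 0)
      simp only [map_zero] at this
      exact this h
    obtain ⟨i, hi⟩ := Finsupp.ne_iff.mp hrepr
    refine ⟨B.coord i, ?_⟩
    simpa [Module.Basis.coord_apply] using hi
  -- generic perturbation step
  have pert : ∀ (g fk : ℝ →ₗ[ℚ] ℚ), ∃ ε : ℚ, ε ≠ 0 ∧
      ∀ j : Fin 3, (g + ε • fk) (d j) = 0 → (g (d j) = 0 ∧ fk (d j) = 0) := by
    intro g fk
    set bad : Fin 3 → ℚ := fun j => -(g (d j)) / fk (d j) with hbad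
    have hfin : ({(0:ℚ)} ∪ Set.range bad).Finite :=
      (Set.finite_singleton 0).union (Set.finite_range bad)
    obtain ⟨ε, hε⟩ := hfin.infinite_compl.nonempty
    simp only [Set.mem_compl_iff, Set.mem_union, Set.mem_singleton_iff, Set.mem_range,
      not_or, not_exists] at hε
    obtain ⟨hε0, hεb⟩ := hε
    refine ⟨ε, hε0, ?_⟩
    intro j hzero
    simp only [LinearMap.add_apply, LinearMap.smul_apply, smul_eq_mul] at hzero
    by_cases hf : fk (d j) = 0
    · constructor
      · rw [hf, mul_zero, add_zero] at hzero; exact hzero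
      · exact hf
    · exfalso
      apply hεb j
      rw [hbad]
      field_simp
      linarith [hzero]
  obtain ⟨f₀, h₀⟩ := hcoord (d 0) (hd 0)
  obtain ⟨f₁, h₁⟩ := hcoord (d 1) (hd 1)
  obtain ⟨f₂, h₂⟩ := hcoord (d 2) (hd 2)
  -- step 1 : nonzero on d 0 and d 1
  obtain ⟨ε, hε0, hεp⟩ := pert f₀ f₁
  set g₁ : ℝ →ₗ[ℚ] ℚ := f₀ + ε • f₁ with hg₁
  have hg₁0 : g₁ (d 0) ≠ 0 := fun h => h₀ (hεp 0 h).1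
  have hg₁1 : g₁ (d 1) ≠ 0 := fun h => h₁ (hεp 1 h).2
  -- step 2 : add f₂
  obtain ⟨ε', hε'0, hε'p⟩ := pert g₁ f₂
  refine ⟨g₁ + ε' • f₂, ?_⟩
  intro j
  fin_cases j
  · exact fun h => hg₁0 (hε'p 0 h).1
  · exact fun h => hg₁1 (hε'p 1 h).1
  · exact fun h => h₂ (hε'p 2 h).2


/-- For every 1×3 restriction array of positive reals there is a D-coloring of ℝ
with 3 colors. -/
theorem real_D_colorable_three_colors (d : Fin 3 → ℝ) (hd : ∀ j, 0 < d j) :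
    ∃ c : ℝ → Fin 3, ∀ j : Fin 3, ∀ x y : ℝ,
      x ≠ y → c x = j → c y = j → |x - y| ≠ d j := by
  classical
  obtain ⟨f, hf⟩ := exists_functional d (fun j => (hd j).ne')
  set e : Fin 3 → ℚ := fun j => f (d j) with he
  have hmul_den : ∀ q : ℚ, (q.num : ℚ) = q * (q.den : ℚ) :=
    fun q => (Rat.mul_den_eq_num q).symm
  -- integer versions
  set L : ℚ := ((e 0).den : ℚ) * ((e 1).den : ℚ) * ((e 2).den : ℚ) with hL
  set z : Fin 3 → ℤ := fun j =>
    if j = 0 then (e 0).num * ((e 1).den * (e 2).den)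
    else if j = 1 then (e 1).num * ((e 0).den * (e 2).den)
    else (e 2).num * ((e 0).den * (e 1).den) with hz
  have hzq : ∀ j, ((z j : ℚ)) = e j * L := by
    intro j
    fin_cases j <;>
      simp only [hz, hL, if_true, if_false, Fin.isValue] <;>
      push_cast <;>
      rw [hmul_den] <;> ring_nf <;>
      try rw [hmul_den] <;> ring
  have hLpos : 0 < L := by
    rw [hL]
    have p0 : (0:ℚ) < ((e 0).den : ℚ) := by exact_mod_cast (e 0).pos
    have p1 : (0:ℚ) < ((e 1).den : ℚ) := by exact_mod_cast (e 1).pos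
    have p2 : (0:ℚ) < ((e 2).den : ℚ) := by exact_mod_cast (e 2).pos
    positivity
  have hzne : ∀ j, z j ≠ 0 := by
    intro j hj
    have h1 := hzq j
    rw [hj] at h1
    have h2 : e j = 0 := by
      rcases mul_eq_zero.mp h1.symm with h | h
      · exact h
      · exact absurd h (ne_of_gt hLpos)
    exact hf j h2
  set n : Fin 3 → ℕ := fun j => (z j).natAbs with hn
  have hnpos : ∀ j, 0 < n j := fun j => Int.natAbs_pos.mpr (hzne j)
  obtain ⟨m, i, hipos, hsumZ⟩ := core (n 0) (n 1) (n 2) (hnpos 0) (hnpos 1) (hnpos 2)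
  set M : ℤ := 2^(m+1) with hM
  have hMpos : (0:ℤ) < M := by rw [hM]; positivity
  have hMRpos : (0:ℝ) < (M : ℝ) := by exact_mod_cast hMpos
  have hiRpos : (0:ℝ) < (i : ℝ) := by exact_mod_cast hipos
  obtain ⟨χ, hχ⟩ := blocks (fun j => (n j : ℝ)) ((M : ℝ) / (i : ℝ))
    (div_pos hMRpos hiRpos)
    (fun j => (Gd M ((n j : ℤ) * i) : ℝ) / (i : ℝ))
    (by
      intro j
      apply div_nonneg _ hiRpos.le
      exact_mod_cast Gd_nonneg hMpos _)
    (by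
      intro j
      rw [div_le_iff₀ hiRpos]
      show ((Gd M ((n j : ℤ) * i) : ℤ) : ℝ) ≤ ((n j : ℕ) : ℝ) * (i : ℝ)
      have h1 : Gd M ((n j : ℤ) * i) ≤ (n j : ℤ) * i :=
        Gd_le_self hMpos (mul_nonneg (by positivity) hipos.le)
      exact_mod_cast h1)
    (by
      intro j K hK
      rw [div_le_iff₀ hiRpos]
      show ((Gd M ((n j : ℤ) * i) : ℤ) : ℝ) ≤ |((n j : ℕ) : ℝ) - (K:ℝ)*((M:ℝ)/(i:ℝ))| * (i:ℝ)
      have h1 : ((Gd M ((n j : ℤ) * i) : ℤ) : ℝ) ≤ |(((n j : ℤ) * i - K * M : ℤ) : ℝ)| := by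
        exact_mod_cast Gd_le_abs hMpos ((n j : ℤ) * i) K
      have h4 : (((n j : ℤ) * i - K * M : ℤ) : ℝ)
          = (((n j:ℕ):ℝ) - (K:ℝ)*((M:ℝ)/(i:ℝ))) * (i:ℝ) := by
        push_cast
        field_simp
      rw [h4, abs_mul, abs_of_pos hiRpos] at h1
      exact h1)
    (by
      show (M:ℝ)/(i:ℝ) ≤ (Gd M ((n 0 : ℤ)*i) : ℝ)/(i:ℝ) + (Gd M ((n 1 : ℤ)*i) : ℝ)/(i:ℝ)
        + (Gd M ((n 2 : ℤ)*i) : ℝ)/(i:ℝ)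
      rw [← add_div, ← add_div]
      exact (div_le_div_iff_of_pos_right hiRpos).mpr (by exact_mod_cast hsumZ))
  refine ⟨fun x => χ (((f x * L : ℚ) : ℝ)), ?_⟩
  intro j x y hxy hcx hcy habs
  set u : ℝ := ((f x * L : ℚ) : ℝ) with hu
  set v : ℝ := ((f y * L : ℚ) : ℝ) with hv
  have hfd : ∀ w₁ w₂ : ℝ, w₁ - w₂ = d j → f w₁ - f w₂ = e j := by
    intro w₁ w₂ hw
    rw [← map_sub, hw]
  have hdiff : u - v = (z j : ℝ) ∨ u - v = -(z j : ℝ) := by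
    have hcases : x - y = d j ∨ x - y = -(d j) := (abs_eq (hd j).le).mp habs
    rcases hcases with hxyd | hxyd
    · left
      have h1 : f x - f y = e j := hfd x y hxyd
      have h2 : (f x * L) - (f y * L) = e j * L := by rw [← sub_mul, h1]
      rw [hu, hv, ← Rat.cast_sub, h2, ← hzq j]
      norm_cast
    · right
      have h1 : f y - f x = e j := hfd y x (by linarith)
      have h2 : (f x * L) - (f y * L) = -(e j * L) := by
        rw [← sub_mul]
        rw [show f x - f y = -(f y - f x) by ring, h1]
        ring
      rw [hu, hv, ← Rat.cast_sub, h2, ← hzq j]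
      push_cast
      ring
  have huv : |u - v| = (n j : ℝ) := by
    have hnn : ((n j : ℝ)) = |(z j : ℝ)| := by
      rw [hn]
      simp only
      rw [Nat.cast_natAbs, Int.cast_abs]
    rcases hdiff with h | h
    · rw [h, hnn]
    · rw [h, abs_neg, hnn]
  have hune : u ≠ v := by
    intro h
    rw [h, sub_self, abs_zero] at huv
    have : (0:ℝ) < (n j : ℝ) := by exact_mod_cast hnpos j
    linarith
  exact hχ j u v hune hcx hcy huv
end

section
/- For every positive real d₁, there exists a pair of positive reals (d₁, d₂) such that ℝ admits no 2-coloring where no two points of color 1 are at distance d₁ and no two points of color 2 are at distance d₂. Hence the upper chromatic number of ℝ is greater than 2. -/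
/-- For every positive real d₁ there is a positive real d₂ such that ℝ admits no
2-coloring where color 0 avoids distance d₁ and color 1 avoids distance d₂.
Hence the upper chromatic number of ℝ is greater than 2. -/
theorem upper_chromatic_real_gt_two (d₁ : ℝ) (hd₁ : 0 < d₁) :
    ∃ d₂ : ℝ, 0 < d₂ ∧
      ¬ ∃ c : ℝ → Fin 2, ∀ x y : ℝ, x ≠ y →
        (c x = 0 → c y = 0 → |x - y| ≠ d₁) ∧
        (c x = 1 → c y = 1 → |x - y| ≠ d₂) := by
  refine ⟨2 * d₁, by linarith, ?_⟩
  rintro ⟨c, h⟩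
  have key : ∀ x : ℝ, (c x = 0 → c (x + d₁) = 0 → False) ∧
      (c x = 1 → c (x + 2 * d₁) = 1 → False) := by
    intro x
    constructor
    · intro h0 h1
      have hne : x ≠ x + d₁ := by intro he; nlinarith [he]
      exact (h x (x + d₁) hne).1 h0 h1 (by rw [abs_of_nonpos (by linarith)]; ring)
    · intro h0 h1
      have hne : x ≠ x + 2 * d₁ := by intro he; nlinarith [he]
      exact (h x (x + 2 * d₁) hne).2 h0 h1 (by rw [abs_of_nonpos (by linarith)]; ring)
  have e1 : (0 : ℝ) + d₁ = d₁ := by ring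
  have e2 : d₁ + d₁ = 2 * d₁ := by ring
  have e3 : (2 : ℝ) * d₁ + d₁ = 3 * d₁ := by ring
  have e4 : (0 : ℝ) + 2 * d₁ = 2 * d₁ := by ring
  have e5 : d₁ + 2 * d₁ = 3 * d₁ := by ring
  have e6 : (2 : ℝ) * d₁ + 2 * d₁ = 4 * d₁ := by ring
  have e7 : (3 : ℝ) * d₁ + d₁ = 4 * d₁ := by ring
  have a01 := (key 0).1; rw [e1] at a01
  have a12 := (key d₁).1; rw [e2] at a12
  have a23 := (key (2 * d₁)).1; rw [e3] at a23
  have a34 := (key (3 * d₁)).1; rw [e7] at a34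
  have b02 := (key 0).2; rw [e4] at b02
  have b13 := (key d₁).2; rw [e5] at b13
  have b24 := (key (2 * d₁)).2; rw [e6] at b24
  have two : ∀ v : Fin 2, v = 0 ∨ v = 1 := by decide
  rcases two (c 0) with h0 | h0 <;> rcases two (c d₁) with h1 | h1 <;>
    rcases two (c (2 * d₁)) with h2 | h2 <;> rcases two (c (3 * d₁)) with h3 | h3 <;>
    rcases two (c (4 * d₁)) with h4 | h4 <;>
    first
      | exact a01 h0 h1 | exact a12 h1 h2 | exact a23 h2 h3 | exact a34 h3 h4
      | exact b02 h0 h2 | exact b13 h1 h3 | exact b24 h2 h4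
end

section
/- The upper chromatic number of ℝ equals 3: for every triple of positive reals (d₁,d₂,d₃) there is a 3-coloring of ℝ avoiding distance dⱼ within color j, and there exists a pair (d₁,d₂) of positive reals for which no such 2-coloring exists. -/
private lemma div_eq_of_between {x p q : ℕ} (hp : 0 < p) (h1 : p * q ≤ x) (h2 : x < p * (q + 1)) :
    x / p = q :=
  Nat.div_eq_of_lt_le (by linarith [Nat.mul_comm p q]) (by linarith [Nat.mul_comm p (q+1)])

-- keyTop : adding 2^c mod 2^(c+1) flips bit c, preserves bit a  (a < c)
private lemma keyTop {a c : ℕ} (hac : a < c) (x : ℕ) (hx : x < 2 ^ (c + 1)) :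
    ((x + 2 ^ c) % 2 ^ (c + 1)) / 2 ^ c % 2 ≠ x / 2 ^ c % 2 ∧
    ((x + 2 ^ c) % 2 ^ (c + 1)) / 2 ^ a % 2 = x / 2 ^ a % 2 := by
  have hM : 2 ^ (c + 1) = 2 ^ c + 2 ^ c := by rw [pow_succ]; ring
  have hca : 2 ^ c = 2 ^ (c - a) * 2 ^ a := by rw [← pow_add]; congr 1; omega
  have hpa : 0 < 2 ^ a := by positivity
  have hpc : 0 < 2 ^ c := by positivity
  have hev : ∃ e, 2 ^ (c - a) = 2 * e := ⟨2 ^ (c - a - 1), by rw [← pow_succ']; congr 1; omega⟩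
  obtain ⟨e, he⟩ := hev
  -- generic: for y with y + 2^c in range
  have main : ∀ y : ℕ, y < 2 ^ c →
      (y + 2 ^ c) / 2 ^ c = y / 2 ^ c + 1 ∧ y / 2 ^ c = 0 ∧
      (y + 2 ^ c) / 2 ^ a = y / 2 ^ a + 2 ^ (c - a) := by
    intro y hy
    refine ⟨Nat.add_div_right _ hpc, Nat.div_eq_of_lt hy, ?_⟩
    rw [hca, ← Nat.add_mul_div_right _ _ hpa]
  by_cases hlt : x < 2 ^ c
  · have hmod : (x + 2 ^ c) % 2 ^ (c + 1) = x + 2 ^ c := Nat.mod_eq_of_lt (by omega)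
    obtain ⟨m1, m2, m3⟩ := main x hlt
    rw [hmod, m1, m2, m3]
    constructor
    · omega
    · omega
  · have hge : x + 2 ^ c ≥ 2 ^ (c + 1) := by omega
    have hmod : (x + 2 ^ c) % 2 ^ (c + 1) = x - 2 ^ c := by
      rw [Nat.mod_eq_sub_mod hge]
      have : x + 2 ^ c - 2 ^ (c + 1) = x - 2 ^ c := by omega
      rw [this]
      exact Nat.mod_eq_of_lt (by omega)
    set y := x - 2 ^ c with hy
    have hyx : x = y + 2 ^ c := by omega
    have hylt : y < 2 ^ c := by omega
    obtain ⟨m1, m2, m3⟩ := main y hylt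
    rw [hmod]
    rw [hyx, m1, m2, m3]
    constructor
    · omega
    · omega

-- keyMid : adding 2^b * v' (v' odd) mod 2^(c+1) flips bit b   (b < c)
private lemma keyMid {b c : ℕ} (hbc : b < c) (x v' : ℕ) (hx : x < 2 ^ (c + 1))
    (hv : v' % 2 = 1) (hlt : 2 ^ b * v' < 2 ^ (c + 1)) :
    ((x + 2 ^ b * v') % 2 ^ (c + 1)) / 2 ^ b % 2 ≠ x / 2 ^ b % 2 := by
  have hpb : 0 < 2 ^ b := by positivity
  have hMb : 2 ^ (c + 1) = 2 ^ (c + 1 - b) * 2 ^ b := by rw [← pow_add]; congr 1; omega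
  obtain ⟨e, he⟩ : ∃ e, 2 ^ (c + 1 - b) = 2 * e :=
    ⟨2 ^ (c - b), by rw [← pow_succ']; congr 1; omega⟩
  by_cases hw : x + 2 ^ b * v' < 2 ^ (c + 1)
  · rw [Nat.mod_eq_of_lt hw]
    have : (x + 2 ^ b * v') / 2 ^ b = x / 2 ^ b + v' := by
      rw [mul_comm (2^b) v', Nat.add_mul_div_right _ _ hpb]
    rw [this]
    omega
  · have hge : x + 2 ^ b * v' ≥ 2 ^ (c + 1) := by omega
    have hmod : (x + 2 ^ b * v') % 2 ^ (c + 1) = x + 2 ^ b * v' - 2 ^ (c + 1) := by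
      rw [Nat.mod_eq_sub_mod hge]
      exact Nat.mod_eq_of_lt (by omega)
    set y := x + 2 ^ b * v' - 2 ^ (c + 1) with hy
    have hkey : y + 2 ^ (c + 1 - b) * 2 ^ b = x + v' * 2 ^ b := by
      rw [← hMb, mul_comm v' (2 ^ b)]; omega
    have e1 : (y + 2 ^ (c + 1 - b) * 2 ^ b) / 2 ^ b = y / 2 ^ b + 2 ^ (c + 1 - b) :=
      Nat.add_mul_div_right _ _ hpb
    have e2 : (x + v' * 2 ^ b) / 2 ^ b = x / 2 ^ b + v' :=
      Nat.add_mul_div_right _ _ hpb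
    rw [hmod]
    rw [hkey, e2] at e1
    omega

-- keyLow : the class {bit_b = 0, bit_a ≠ bit_c} avoids difference 2^a mod 2^(c+1)
private lemma keyLow {a b c : ℕ} (hab : a < b) (hbc : b < c) (x : ℕ) (hx : x < 2 ^ (c + 1))
    (H1 : x / 2 ^ b % 2 = 0 ∧ x / 2 ^ a % 2 ≠ x / 2 ^ c % 2)
    (H2 : ((x + 2 ^ a) % 2 ^ (c + 1)) / 2 ^ b % 2 = 0 ∧
      ((x + 2 ^ a) % 2 ^ (c + 1)) / 2 ^ a % 2 ≠ ((x + 2 ^ a) % 2 ^ (c + 1)) / 2 ^ c % 2) :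
    False := by
  obtain ⟨H1b, H1ac⟩ := H1
  have hpa : 0 < 2 ^ a := by positivity
  have hpb : 0 < 2 ^ b := by positivity
  have hpc : 0 < 2 ^ c := by positivity
  have hM : 2 ^ (c + 1) = 2 ^ c * 2 := by rw [pow_succ]
  have hab2 : 2 ^ a < 2 ^ b := Nat.pow_lt_pow_right (by norm_num) hab
  have hbc2 : 2 ^ b < 2 ^ c := Nat.pow_lt_pow_right (by norm_num) hbc
  have hbitc : x / 2 ^ c < 2 := by rw [Nat.div_lt_iff_lt_mul hpc]; omega
  by_cases hw : x + 2 ^ a < 2 ^ (c + 1)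
  · -- no wrap
    rw [Nat.mod_eq_of_lt hw] at H2
    obtain ⟨H2b, H2ac⟩ := H2
    have hxa : (x + 2 ^ a) / 2 ^ a = x / 2 ^ a + 1 := Nat.add_div_right _ hpa
    have hbitc' : (x + 2 ^ a) / 2 ^ c < 2 := by rw [Nat.div_lt_iff_lt_mul hpc]; omega
    have hea : 2 ^ (a + 1) = 2 ^ a * 2 := by rw [pow_succ]
    by_cases h0 : x / 2 ^ a % 2 = 0
    · -- bit a of x is 0 : bits b, c are preserved
      have hcx : x / 2 ^ c = 1 := by
        clear hxa hbitc'
        generalize x / 2 ^ a = Aa at *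
        generalize x / 2 ^ c = Ac at *
        omega
      obtain ⟨q, r, hqr, hrlt⟩ : ∃ q r, x = 2 ^ (a + 1) * q + r ∧ r < 2 ^ (a + 1) :=
        ⟨x / 2 ^ (a + 1), x % 2 ^ (a + 1), (Nat.div_add_mod _ _).symm,
          Nat.mod_lt _ (by positivity)⟩
      have hx2 : x = r + 2 ^ a * (2 * q) := by rw [hqr, hea]; ring
      have hdiv : x / 2 ^ a = r / 2 ^ a + 2 * q := by
        rw [hx2, Nat.add_mul_div_left _ _ hpa]
      have hra : r / 2 ^ a < 2 := by rw [Nat.div_lt_iff_lt_mul hpa]; omega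
      have hr0 : r < 2 ^ a := by
        have h1 : r / 2 ^ a = 0 := by
          clear hxa hbitc' H1ac H2ac
          generalize x / 2 ^ a = Aa at *
          generalize r / 2 ^ a = Ra at *
          omega
        exact ((Nat.div_eq_zero_iff).mp h1).resolve_left hpa.ne'
      have hqx : x / 2 ^ (a + 1) = q := by
        rw [hqr, add_comm (2 ^ (a + 1) * q) r, Nat.add_mul_div_left _ _
          (by positivity : 0 < 2 ^ (a+1)), Nat.div_eq_of_lt hrlt, zero_add]
      have hqx' : (x + 2 ^ a) / 2 ^ (a + 1) = q := by
        have hx3 : x + 2 ^ a = (r + 2 ^ a) + 2 ^ (a + 1) * q := by rw [hqr]; ring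
        rw [hx3, Nat.add_mul_div_left _ _ (by positivity : 0 < 2 ^ (a+1)),
          Nat.div_eq_of_lt (by omega), zero_add]
      have hsplit : ∀ s : ℕ, a < s → ∀ z : ℕ, z / 2 ^ s = z / 2 ^ (a + 1) / 2 ^ (s - (a + 1)) := by
        intro s hs z
        rw [Nat.div_div_eq_div_mul, ← pow_add]
        congr 2
        omega
      have hcpres : (x + 2 ^ a) / 2 ^ c = x / 2 ^ c := by
        rw [hsplit c (by omega) (x + 2 ^ a), hsplit c (by omega) x, hqx, hqx']
      clear hdiv hra hr0
      generalize (x + 2 ^ a) / 2 ^ a = Ba at *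
      generalize (x + 2 ^ a) / 2 ^ c = Bc at *
      generalize x / 2 ^ a = Aa at *
      generalize x / 2 ^ c = Ac at *
      omega
    · -- bit a of x is 1 ; then bit c of x must be 0, so x < 2^c
      have hcx : x / 2 ^ c = 0 := by
        clear hxa hbitc'
        generalize x / 2 ^ a = Aa at *
        generalize x / 2 ^ c = Ac at *
        omega
      have hxc : x < 2 ^ c := by
        by_contra hcon
        have : 1 ≤ x / 2 ^ c := (Nat.one_le_div_iff hpc).mpr (by omega)
        omega
      have hcx' : (x + 2 ^ a) / 2 ^ c = 1 := by
        clear hbitc hcx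
        generalize (x + 2 ^ a) / 2 ^ a = Ba at *
        generalize (x + 2 ^ a) / 2 ^ c = Bc at *
        generalize x / 2 ^ a = Aa at *
        omega
      have hgec : 2 ^ c ≤ x + 2 ^ a := by
        have : 1 ≤ (x + 2 ^ a) / 2 ^ c := by omega
        exact (Nat.one_le_div_iff hpc).mp this
      -- x ∈ [2^c - 2^a, 2^c) forces bit b of x to be 1
      have hcb : 2 ^ b * 2 ^ (c - b) = 2 ^ c := by rw [← pow_add]; congr 1; omega
      have hpcb : 0 < 2 ^ (c - b) := by positivity
      obtain ⟨w, hwdef⟩ : ∃ w, 2 ^ (c - b) = w + 1 := ⟨2 ^ (c - b) - 1, by omega⟩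
      have hweven : (w + 1) % 2 = 0 := by
        obtain ⟨e, he⟩ : ∃ e, 2 ^ (c - b) = 2 * e :=
          ⟨2 ^ (c - b - 1), by rw [← pow_succ']; congr 1; omega⟩
        omega
      have hprod : (w + 1) * 2 ^ b = 2 ^ c := by rw [← hwdef, mul_comm]; exact hcb
      have hbx : x / 2 ^ b = w := by
        apply Nat.div_eq_of_lt_le
        · generalize hww : w * 2 ^ b = W at *
          have h1 : W + 2 ^ b = 2 ^ c := by rw [← hww]; rw [add_mul, one_mul] at hprod; omega
          omega
        · generalize hww : (w + 1) * 2 ^ b = W at *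
          omega
      rw [hbx] at H1b
      omega
  · -- wrap case : then bits a and c of x are both 1, contradicting H1ac
    have hMa : 2 ^ a * 2 ^ (c + 1 - a) = 2 ^ (c + 1) := by rw [← pow_add]; congr 1; omega
    have hpca : 0 < 2 ^ (c + 1 - a) := by positivity
    obtain ⟨w, hwdef⟩ : ∃ w, 2 ^ (c + 1 - a) = w + 1 := ⟨2 ^ (c + 1 - a) - 1, by omega⟩
    have hweven : (w + 1) % 2 = 0 := by
      obtain ⟨e, he⟩ : ∃ e, 2 ^ (c + 1 - a) = 2 * e :=
        ⟨2 ^ (c - a), by rw [← pow_succ']; congr 1; omega⟩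
      omega
    have hprod : (w + 1) * 2 ^ a = 2 ^ (c + 1) := by rw [← hwdef, mul_comm]; exact hMa
    have h1 : x / 2 ^ a = w := by
      apply Nat.div_eq_of_lt_le
      · generalize hww : w * 2 ^ a = W at *
        have h2 : W + 2 ^ a = 2 ^ (c + 1) := by rw [← hww]; rw [add_mul, one_mul] at hprod; omega
        omega
      · generalize hww : (w + 1) * 2 ^ a = W at *
        omega
    have hc1 : x / 2 ^ c = 1 := by
      have h2 : 1 ≤ x / 2 ^ c := (Nat.one_le_div_iff hpc).mpr (by omega)
      omega
    rw [h1, hc1] at H1ac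
    omega

private lemma fin3_cover (i₀ i₁ i₂ l : Fin 3) (h01 : i₀ ≠ i₁) (h02 : i₀ ≠ i₂)
    (h12 : i₁ ≠ i₂) : l = i₀ ∨ l = i₁ ∨ l = i₂ := by
  revert h01 h02 h12
  revert i₀ i₁ i₂ l
  decide

private lemma int_distinct (m : Fin 3 → ℕ)
    (i₀ i₁ i₂ : Fin 3) (h01 : i₀ ≠ i₁) (h02 : i₀ ≠ i₂) (h12 : i₁ ≠ i₂)
    (a b c u₀ u₁ u₂ : ℕ) (hu₀ : Odd u₀) (hu₁ : Odd u₁) (hu₂ : Odd u₂)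
    (e₀ : m i₀ = 2 ^ a * u₀) (e₁ : m i₁ = 2 ^ b * u₁) (e₂ : m i₂ = 2 ^ c * u₂)
    (hab : a < b) (hbc : b < c) :
    ∃ g : ℤ → Fin 3, ∀ l k, g k = l → g (k + (m l : ℤ)) ≠ l := by
  obtain ⟨M, hMdef⟩ : ∃ M, M = 2 ^ (c + 1) := ⟨_, rfl⟩
  have hM2 : 2 ≤ M := by
    have h : (2:ℕ) ^ 1 ≤ 2 ^ (c + 1) := Nat.pow_le_pow_right (by norm_num) (by omega)
    rw [hMdef]
    simpa using h
  have hMpos : (0 : ℤ) < (M : ℤ) := by positivity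
  -- the odd inverse t of u₀ mod M
  obtain ⟨t, ht, htodd⟩ : ∃ t : ℕ, t * u₀ % M = 1 ∧ Odd t := by
    refine ⟨u₀ ^ (Nat.totient M - 1), ?_, hu₀.pow⟩
    have hcop : Nat.Coprime u₀ M := by
      rw [hMdef]
      exact Nat.Coprime.pow_right _ (Nat.coprime_two_right.mpr hu₀)
    have htot : 0 < Nat.totient M := Nat.totient_pos.mpr (by omega)
    have hpow : u₀ ^ (Nat.totient M - 1) * u₀ = u₀ ^ Nat.totient M := by
      rw [← pow_succ]
      congr 1
      omega
    rw [hpow]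
    have := Nat.ModEq.pow_totient hcop
    unfold Nat.ModEq at this
    rw [this]
    exact Nat.mod_eq_of_lt (by omega)
  -- X k = (t * k) mod M, as a natural number
  set X : ℤ → ℕ := fun k => ((t : ℤ) * k % (M : ℤ)).toNat with hX
  have hXlt : ∀ k, X k < M := by
    intro k
    have h1 := Int.emod_lt_of_pos ((t : ℤ) * k) hMpos
    have h2 := Int.emod_nonneg ((t : ℤ) * k) (show (M:ℤ) ≠ 0 by omega)
    show ((t : ℤ) * k % (M : ℤ)).toNat < M
    omega
  have hstep : ∀ (k : ℤ) (n : ℕ), X (k + (n : ℤ)) = (X k + (t * n) % M) % M := by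
    intro k n
    have h1 : (t : ℤ) * (k + (n : ℤ)) % M = (((t : ℤ) * k % M) + ((t : ℤ) * n % M)) % M := by
      rw [mul_add, Int.add_emod]
    have hB : (t : ℤ) * (n : ℤ) % M = ((t * n % M : ℕ) : ℤ) := by
      push_cast
      ring_nf
    show ((t : ℤ) * (k + (n : ℤ)) % (M : ℤ)).toNat
      = ((((t : ℤ) * k % (M : ℤ)).toNat + (t * n) % M) % M)
    rw [h1, hB]
    obtain ⟨A, hA⟩ : ∃ A, A = (t : ℤ) * k % (M : ℤ) := ⟨_, rfl⟩
    rw [← hA]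
    have h2 : A < M := hA ▸ Int.emod_lt_of_pos _ hMpos
    have h3 : 0 ≤ A := hA ▸ Int.emod_nonneg _ (show (M : ℤ) ≠ 0 by omega)
    obtain ⟨B, hB2⟩ : ∃ B, B = t * n % M := ⟨_, rfl⟩
    rw [← hB2]
    have hBn : B < M := hB2 ▸ Nat.mod_lt _ (by omega)
    obtain ⟨Mo, hMo⟩ : ∃ Mo, Mo = M := ⟨_, rfl⟩
    rw [← hMo] at h2 hBn ⊢
    clear hA h1 hB hB2 hMdef hM2 hMpos hMo
    by_cases hcase : A + (B : ℤ) < Mo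
    · rw [Int.emod_eq_of_lt (by omega) hcase, Nat.mod_eq_of_lt (by omega)]
      omega
    · have hsub : (A + (B : ℤ)) % Mo = (A + (B : ℤ) - Mo) % Mo := by
        conv_lhs => rw [show A + (B : ℤ) = (A + (B : ℤ) - Mo) + 1 * Mo by ring]
        rw [Int.add_mul_emod_self_right]
      rw [hsub, Int.emod_eq_of_lt (by omega) (by omega), Nat.mod_eq_sub_mod (by omega),
        Nat.mod_eq_of_lt (by omega)]
      omega
  -- the three normalized displacements
  have hd0 : (t * m i₀) % M = 2 ^ a := by
    rw [e₀, hMdef, show 2 ^ (c + 1) = 2 ^ a * 2 ^ (c + 1 - a) by rw [← pow_add]; congr 1; omega,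
      show t * (2 ^ a * u₀) = 2 ^ a * (t * u₀) by ring, Nat.mul_mod_mul_left]
    have h1 : t * u₀ % 2 ^ (c + 1 - a) = 1 := by
      have hdvd : 2 ^ (c + 1 - a) ∣ M := by
        rw [hMdef]
        exact pow_dvd_pow 2 (by omega)
      have := Nat.mod_mod_of_dvd (t * u₀) hdvd
      rw [← this, ht]
      exact Nat.mod_eq_of_lt (Nat.one_lt_two_pow_iff.mpr (by omega))
    rw [h1, mul_one]
  have hd2 : (t * m i₂) % M = 2 ^ c := by
    rw [e₂, hMdef, show 2 ^ (c + 1) = 2 ^ c * 2 by rw [pow_succ],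
      show t * (2 ^ c * u₂) = 2 ^ c * (t * u₂) by ring, Nat.mul_mod_mul_left]
    have h1 : t * u₂ % 2 = 1 := Nat.odd_iff.mp (htodd.mul hu₂)
    rw [h1, mul_one]
  obtain ⟨v', hv'def⟩ : ∃ v', v' = t * u₁ % 2 ^ (c + 1 - b) := ⟨_, rfl⟩
  have hd1 : (t * m i₁) % M = 2 ^ b * v' := by
    rw [e₁, hMdef, show 2 ^ (c + 1) = 2 ^ b * 2 ^ (c + 1 - b) by rw [← pow_add]; congr 1; omega,
      show t * (2 ^ b * u₁) = 2 ^ b * (t * u₁) by ring, Nat.mul_mod_mul_left, hv'def]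
  have hv'odd : v' % 2 = 1 := by
    rw [hv'def, Nat.mod_mod_of_dvd _ (dvd_pow_self 2 (by omega : c + 1 - b ≠ 0))]
    exact Nat.odd_iff.mp (htodd.mul hu₁)
  have hv'lt : 2 ^ b * v' < M := by
    rw [← hd1]
    exact Nat.mod_lt _ (by omega)
  -- the coloring
  refine ⟨fun k => if X k / 2 ^ a % 2 = X k / 2 ^ c % 2 then i₂
    else if X k / 2 ^ b % 2 = 0 then i₀ else i₁, ?_⟩
  intro l k hk hk'
  have hcover : l = i₀ ∨ l = i₁ ∨ l = i₂ := fin3_cover i₀ i₁ i₂ l h01 h02 h12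
  simp only at hk hk'
  rcases hcover with rfl | rfl | rfl
  · -- color l = i₀, displacement val 2^a
    have hx' : X (k + (m l : ℤ)) = (X k + 2 ^ a) % 2 ^ (c + 1) := by
      rw [hstep, hd0, hMdef]
    rw [hx'] at hk'
    have c1 : ¬ X k / 2 ^ a % 2 = X k / 2 ^ c % 2 := by
      intro h; rw [if_pos h] at hk; exact h02 hk.symm
    have c2 : X k / 2 ^ b % 2 = 0 := by
      by_contra h
      rw [if_neg c1, if_neg h] at hk
      exact h01 hk.symm
    have c1' : ¬ (X k + 2 ^ a) % 2 ^ (c + 1) / 2 ^ a % 2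
        = (X k + 2 ^ a) % 2 ^ (c + 1) / 2 ^ c % 2 := by
      intro h; rw [if_pos h] at hk'; exact h02 hk'.symm
    have c2' : (X k + 2 ^ a) % 2 ^ (c + 1) / 2 ^ b % 2 = 0 := by
      by_contra h
      rw [if_neg c1', if_neg h] at hk'
      exact h01 hk'.symm
    exact keyLow hab hbc (X k) (hMdef ▸ hXlt k) ⟨c2, c1⟩ ⟨c2', c1'⟩
  · -- color l = i₁, displacement val 2^b
    have hx' : X (k + (m l : ℤ)) = (X k + 2 ^ b * v') % 2 ^ (c + 1) := by
      rw [hstep, hd1, hMdef]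
    rw [hx'] at hk'
    have c1 : ¬ X k / 2 ^ a % 2 = X k / 2 ^ c % 2 := by
      intro h; rw [if_pos h] at hk; exact h12 hk.symm
    have c2 : ¬ X k / 2 ^ b % 2 = 0 := by
      intro h
      rw [if_neg c1, if_pos h] at hk
      exact h01 hk
    have c1' : ¬ (X k + 2 ^ b * v') % 2 ^ (c + 1) / 2 ^ a % 2
        = (X k + 2 ^ b * v') % 2 ^ (c + 1) / 2 ^ c % 2 := by
      intro h; rw [if_pos h] at hk'; exact h12 hk'.symm
    have c2' : ¬ (X k + 2 ^ b * v') % 2 ^ (c + 1) / 2 ^ b % 2 = 0 := by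
      intro h
      rw [if_neg c1', if_pos h] at hk'
      exact h01 hk'
    have hflip := keyMid hbc (X k) v' (hMdef ▸ hXlt k) hv'odd (hMdef ▸ hv'lt)
    generalize (X k + 2 ^ b * v') % 2 ^ (c + 1) / 2 ^ b = B at *
    generalize X k / 2 ^ b = A at *
    omega
  · -- color l = i₂, displacement val 2^c
    have hx' : X (k + (m l : ℤ)) = (X k + 2 ^ c) % 2 ^ (c + 1) := by
      rw [hstep, hd2, hMdef]
    rw [hx'] at hk'
    have c1 : X k / 2 ^ a % 2 = X k / 2 ^ c % 2 := by
      by_contra h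
      rw [if_neg h] at hk
      by_cases h2 : X k / 2 ^ b % 2 = 0
      · rw [if_pos h2] at hk; exact h02 hk
      · rw [if_neg h2] at hk; exact h12 hk
    have c1' : (X k + 2 ^ c) % 2 ^ (c + 1) / 2 ^ a % 2
        = (X k + 2 ^ c) % 2 ^ (c + 1) / 2 ^ c % 2 := by
      by_contra h
      rw [if_neg h] at hk'
      by_cases h2 : (X k + 2 ^ c) % 2 ^ (c + 1) / 2 ^ b % 2 = 0
      · rw [if_pos h2] at hk'; exact h02 hk'
      · rw [if_neg h2] at hk'; exact h12 hk'
    obtain ⟨f1, f2⟩ := keyTop (show a < c by omega) (X k) (hMdef ▸ hXlt k)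
    generalize (X k + 2 ^ c) % 2 ^ (c + 1) / 2 ^ a = Ba at *
    generalize (X k + 2 ^ c) % 2 ^ (c + 1) / 2 ^ c = Bc at *
    generalize X k / 2 ^ a = Aa at *
    generalize X k / 2 ^ c = Ac at *
    omega

private lemma int_pair (m : Fin 3 → ℕ) (i j : Fin 3) (hij : i ≠ j)
    (v u₁ u₂ : ℕ) (h1 : Odd u₁) (h2 : Odd u₂)
    (ei : m i = 2 ^ v * u₁) (ej : m j = 2 ^ v * u₂) :
    ∃ g : ℤ → Fin 3, ∀ l k, g k = l → g (k + (m l : ℤ)) ≠ l := by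
  have hv : (0 : ℤ) < 2 ^ v := by positivity
  refine ⟨fun k => if k / (2 ^ v : ℤ) % 2 = 0 then i else j, ?_⟩
  have step : ∀ (k : ℤ) (u : ℕ), (k + ((2 ^ v * u : ℕ) : ℤ)) / (2 ^ v : ℤ)
      = k / (2 ^ v : ℤ) + u := by
    intro k u
    have : (k + ((2 ^ v * u : ℕ) : ℤ)) = k + (u : ℤ) * (2 ^ v : ℤ) := by push_cast; ring
    rw [this, Int.add_mul_ediv_right _ _ (ne_of_gt hv)]
  intro l k hk hk'
  simp only at hk hk'
  by_cases hli : l = i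
  · subst hli
    rw [ei] at hk'
    have c1 : k / (2 ^ v : ℤ) % 2 = 0 := by
      by_contra h
      rw [if_neg h] at hk
      exact hij hk.symm
    have c2 : (k + ((2 ^ v * u₁ : ℕ) : ℤ)) / (2 ^ v : ℤ) % 2 = 0 := by
      by_contra h
      rw [if_neg h] at hk'
      exact hij hk'.symm
    rw [step k u₁] at c2
    obtain ⟨s, hs1⟩ := h1
    have : (u₁ : ℤ) = 2 * s + 1 := by push_cast [hs1]; ring
    omega
  by_cases hlj : l = j
  · subst hlj
    rw [ej] at hk'
    have c1 : ¬ k / (2 ^ v : ℤ) % 2 = 0 := by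
      intro h
      rw [if_pos h] at hk
      exact hij hk
    have c2 : ¬ (k + ((2 ^ v * u₂ : ℕ) : ℤ)) / (2 ^ v : ℤ) % 2 = 0 := by
      intro h
      rw [if_pos h] at hk'
      exact hij hk'
    rw [step k u₂] at c2
    obtain ⟨s, hs1⟩ := h2
    have : (u₂ : ℤ) = 2 * s + 1 := by push_cast [hs1]; ring
    omega
  · split_ifs at hk
    · exact hli hk.symm
    · exact hlj hk.symm

private lemma int_coloring (m : Fin 3 → ℕ) (hm : ∀ j, 0 < m j) :
    ∃ g : ℤ → Fin 3, ∀ l k, g k = l → g (k + (m l : ℤ)) ≠ l := by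
  have hfac : ∀ j, m j = 2 ^ ((m j).factorization 2) * (m j / 2 ^ ((m j).factorization 2)) :=
    fun j => (Nat.ordProj_mul_ordCompl_eq_self (m j) 2).symm
  have hodd : ∀ j, Odd (m j / 2 ^ ((m j).factorization 2)) := by
    intro j
    have h2 := Nat.not_dvd_ordCompl Nat.prime_two (hm j).ne'
    rw [Nat.odd_iff]
    omega
  set v : Fin 3 → ℕ := fun j => (m j).factorization 2 with hvdef
  have hv : ∀ j, v j = (m j).factorization 2 := fun j => rfl
  by_cases h01 : v 0 = v 1
  · exact int_pair m 0 1 (by decide) (v 0) _ _ (hodd 0) (hodd 1) (hfac 0)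
      (by rw [h01]; exact hfac 1)
  by_cases h02 : v 0 = v 2
  · exact int_pair m 0 2 (by decide) (v 0) _ _ (hodd 0) (hodd 2) (hfac 0)
      (by rw [h02]; exact hfac 2)
  by_cases h12 : v 1 = v 2
  · exact int_pair m 1 2 (by decide) (v 1) _ _ (hodd 1) (hodd 2) (hfac 1)
      (by rw [h12]; exact hfac 2)
  · have H : ∀ i₀ i₁ i₂ : Fin 3, i₀ ≠ i₁ → i₀ ≠ i₂ → i₁ ≠ i₂ → v i₀ < v i₁ → v i₁ < v i₂ →
        ∃ g : ℤ → Fin 3, ∀ l k, g k = l → g (k + (m l : ℤ)) ≠ l := by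
      intro i₀ i₁ i₂ d1 d2 d3 o1 o2
      exact int_distinct m i₀ i₁ i₂ d1 d2 d3 (v i₀) (v i₁) (v i₂) _ _ _
        (hodd i₀) (hodd i₁) (hodd i₂) (hfac i₀) (hfac i₁) (hfac i₂) o1 o2
    rcases lt_trichotomy (v 0) (v 1) with h1 | h1 | h1 <;>
      rcases lt_trichotomy (v 0) (v 2) with h2 | h2 | h2 <;>
      rcases lt_trichotomy (v 1) (v 2) with h3 | h3 | h3 <;>
      first
        | exact H 0 1 2 (by decide) (by decide) (by decide) (by omega) (by omega)
        | exact H 0 2 1 (by decide) (by decide) (by decide) (by omega) (by omega)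
        | exact H 1 0 2 (by decide) (by decide) (by decide) (by omega) (by omega)
        | exact H 1 2 0 (by decide) (by decide) (by decide) (by omega) (by omega)
        | exact H 2 0 1 (by decide) (by decide) (by decide) (by omega) (by omega)
        | exact H 2 1 0 (by decide) (by decide) (by decide) (by omega) (by omega)
        | omega

private lemma lift_coloring (d : Fin 3 → ℝ) (u : ℝ) (hu : 0 < u) (m : Fin 3 → ℕ)
    (hd : ∀ j, d j = (m j : ℝ) * u)
    (hg : ∃ g : ℤ → Fin 3, ∀ l k, g k = l → g (k + (m l : ℤ)) ≠ l) :
    ∃ c : ℝ → Fin 3, ∀ j : Fin 3, ∀ x y : ℝ, x ≠ y → c x = j → c y = j → |x - y| ≠ d j := by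
  obtain ⟨g, hgp⟩ := hg
  refine ⟨fun x => g ⌊x / u⌋, ?_⟩
  intro j x y hxy hcx hcy habs
  simp only at hcx hcy
  have hda : 0 ≤ d j := by rw [hd j]; positivity
  have key : ∀ z w : ℝ, g ⌊w / u⌋ = j → g ⌊z / u⌋ = j → z - w = d j → False := by
    intro z w hw hz hzw
    have hz2 : z / u = w / u + ((m j : ℤ) : ℝ) := by
      rw [show z = w + (m j : ℝ) * u by rw [← hd j]; linarith]
      push_cast
      field_simp
    have hfl : ⌊z / u⌋ = ⌊w / u⌋ + (m j : ℤ) := by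
      rw [hz2, Int.floor_add_intCast]
    exact hgp j ⌊w / u⌋ hw (by rw [← hfl]; exact hz)
  rcases (abs_eq hda).mp habs with h | h
  · exact key x y hcy hcx h
  · exact key y x hcx hcy (by linarith)

private lemma pair_coloring (a b : ℝ) (hind : ∀ p q : ℤ, p • a + q • b = 0 → p = 0 ∧ q = 0)
    (i j : Fin 3) (hij : i ≠ j) :
    ∃ c : ℝ → Fin 3, (∀ x, c x = i ∨ c x = j) ∧
      (∀ x : ℝ, ¬(c x = i ∧ c (x + a) = i)) ∧ (∀ x : ℝ, ¬(c x = j ∧ c (x + b) = j)) := by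
  classical
  set G : AddSubgroup ℝ := AddSubgroup.closure {a, b} with hG
  have haG : a ∈ G := AddSubgroup.subset_closure (by simp)
  have hbG : b ∈ G := AddSubgroup.subset_closure (by simp)
  let rep : ℝ → ℝ := fun x => Quotient.out (QuotientAddGroup.mk (s := G) x)
  have hrep : ∀ x : ℝ, x - rep x ∈ G := by
    intro x
    have h1 : (QuotientAddGroup.mk (s := G) (rep x)) = QuotientAddGroup.mk (s := G) x :=
      Quotient.out_eq _
    exact QuotientAddGroup.eq_iff_sub_mem.mp h1.symm
  have hrep_eq : ∀ x y : ℝ, x - y ∈ G → rep x = rep y := by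
    intro x y hxy
    have h1 : QuotientAddGroup.mk (s := G) x = QuotientAddGroup.mk (s := G) y :=
      QuotientAddGroup.eq_iff_sub_mem.mpr hxy
    simp only [rep, h1]
  have hex : ∀ x : ℝ, ∃ pq : ℤ × ℤ, pq.1 • a + pq.2 • b = x - rep x := by
    intro x
    obtain ⟨p, q, h⟩ := AddSubgroup.mem_closure_pair.mp (hrep x)
    exact ⟨(p, q), h⟩
  let P : ℝ → ℤ × ℤ := fun x => Classical.choose (hex x)
  have hP : ∀ x : ℝ, (P x).1 • a + (P x).2 • b = x - rep x := fun x => Classical.choose_spec (hex x)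
  have huniq : ∀ p q p' q' : ℤ, p • a + q • b = p' • a + q' • b → p = p' ∧ q = q' := by
    intro p q p' q' h
    have h2 : (p - p') • a + (q - q') • b = 0 := by
      simp only [zsmul_eq_mul] at h ⊢
      push_cast
      ring_nf
      ring_nf at h
      linarith
    obtain ⟨h3, h4⟩ := hind _ _ h2
    omega
  refine ⟨fun x => if ((P x).1 + (P x).2) % 2 = 0 then i else j, ?_, ?_, ?_⟩
  · intro x
    simp only
    split_ifs
    · exact Or.inl rfl
    · exact Or.inr rfl
  · rintro x ⟨h1, h2⟩
    simp only at h1 h2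
    have hr : rep (x + a) = rep x := hrep_eq _ _ (by rw [add_sub_cancel_left]; exact haG)
    have hcoord : (P (x + a)).1 = (P x).1 + 1 ∧ (P (x + a)).2 = (P x).2 := by
      have e1 : (P (x + a)).1 • a + (P (x + a)).2 • b = ((P x).1 + 1) • a + (P x).2 • b := by
        rw [hP (x + a), hr, add_smul, one_smul]
        have := hP x
        linarith
      have := huniq _ _ _ _ e1
      omega
    have c1 : ((P x).1 + (P x).2) % 2 = 0 := by
      by_contra h
      rw [if_neg h] at h1
      exact hij h1.symm
    have c2 : ((P (x + a)).1 + (P (x + a)).2) % 2 = 0 := by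
      by_contra h
      rw [if_neg h] at h2
      exact hij h2.symm
    omega
  · rintro x ⟨h1, h2⟩
    simp only at h1 h2
    have hr : rep (x + b) = rep x := hrep_eq _ _ (by rw [add_sub_cancel_left]; exact hbG)
    have hcoord : (P (x + b)).1 = (P x).1 ∧ (P (x + b)).2 = (P x).2 + 1 := by
      have e1 : (P (x + b)).1 • a + (P (x + b)).2 • b = (P x).1 • a + ((P x).2 + 1) • b := by
        rw [hP (x + b), hr, add_smul, one_smul]
        have := hP x
        linarith
      have := huniq _ _ _ _ e1
      omega
    have c1 : ¬ ((P x).1 + (P x).2) % 2 = 0 := by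
      intro h
      rw [if_pos h] at h1
      exact hij h1
    have c2 : ¬ ((P (x + b)).1 + (P (x + b)).2) % 2 = 0 := by
      intro h
      rw [if_pos h] at h2
      exact hij h2
    omega

private lemma pair_to_full (d : Fin 3 → ℝ) (hd : ∀ j, 0 < d j) (i j : Fin 3) (hij : i ≠ j)
    (hind : ∀ p q : ℤ, p • d i + q • d j = 0 → p = 0 ∧ q = 0) :
    ∃ c : ℝ → Fin 3, ∀ l : Fin 3, ∀ x y : ℝ, x ≠ y → c x = l → c y = l → |x - y| ≠ d l := by
  obtain ⟨c, htot, hstepi, hstepj⟩ := pair_coloring (d i) (d j) hind i j hij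
  refine ⟨c, ?_⟩
  intro l x y hxy hcx hcy habs
  by_cases hli : l = i
  · subst hli
    rcases (abs_eq (le_of_lt (hd l))).mp habs with h | h
    · exact hstepi y ⟨hcy, by rw [show y + d l = x by linarith]; exact hcx⟩
    · exact hstepi x ⟨hcx, by rw [show x + d l = y by linarith]; exact hcy⟩
  by_cases hlj : l = j
  · subst hlj
    rcases (abs_eq (le_of_lt (hd l))).mp habs with h | h
    · exact hstepj y ⟨hcy, by rw [show y + d l = x by linarith]; exact hcx⟩
    · exact hstepj x ⟨hcx, by rw [show x + d l = y by linarith]; exact hcy⟩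
  · rcases htot x with h | h
    · exact hli (hcx.symm.trans h)
    · exact hlj (hcx.symm.trans h)

private lemma comm_extract (d0 d1 : ℝ) (h0 : 0 < d0) (h1 : 0 < d1)
    (h : ¬ ∀ p q : ℤ, p • d0 + q • d1 = 0 → p = 0 ∧ q = 0) :
    ∃ P Q : ℕ, 0 < P ∧ 0 < Q ∧ (P : ℝ) * d1 = (Q : ℝ) * d0 := by
  push_neg at h
  obtain ⟨p, q, hpq, hne⟩ := h
  simp only [zsmul_eq_mul] at hpq
  have hp0 : p ≠ 0 := by
    rintro rfl
    have hq : (q : ℝ) * d1 = 0 := by push_cast at hpq; linarith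
    have : (q : ℝ) = 0 := by
      rcases mul_eq_zero.mp hq with h | h
      · exact h
      · linarith
    have : q = 0 := by exact_mod_cast this
    exact hne rfl this
  rcases lt_trichotomy p 0 with hp | hp | hp
  · -- p < 0 so q > 0
    have hpR : (p : ℝ) < 0 := by exact_mod_cast hp
    have hq : 0 < q := by
      by_contra hq
      push_neg at hq
      have hqR : (q : ℝ) ≤ 0 := by exact_mod_cast hq
      nlinarith
    refine ⟨q.toNat, (-p).toNat, by omega, by omega, ?_⟩
    have e1 : ((q.toNat : ℕ) : ℝ) = (q : ℝ) := by
      have e0 : (q.toNat : ℤ) = q := Int.toNat_of_nonneg (by omega)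
      exact_mod_cast congrArg (fun z : ℤ => (z : ℝ)) e0
    have e2 : (((-p).toNat : ℕ) : ℝ) = -(p : ℝ) := by
      have e0 : ((-p).toNat : ℤ) = -p := Int.toNat_of_nonneg (by omega)
      have := congrArg (fun z : ℤ => (z : ℝ)) e0
      push_cast at this
      exact_mod_cast this
    rw [e1, e2]
    linarith
  · exact absurd hp hp0
  · -- p > 0 so q < 0
    have hpR : (0 : ℝ) < p := by exact_mod_cast hp
    have hq : q < 0 := by
      by_contra hq
      push_neg at hq
      have hqR : (0 : ℝ) ≤ q := by exact_mod_cast hq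
      nlinarith
    refine ⟨(-q).toNat, p.toNat, by omega, by omega, ?_⟩
    have e1 : (((-q).toNat : ℕ) : ℝ) = -(q : ℝ) := by
      have e0 : ((-q).toNat : ℤ) = -q := Int.toNat_of_nonneg (by omega)
      have := congrArg (fun z : ℤ => (z : ℝ)) e0
      push_cast at this
      exact_mod_cast this
    have e2 : ((p.toNat : ℕ) : ℝ) = (p : ℝ) := by
      have e0 : (p.toNat : ℤ) = p := Int.toNat_of_nonneg (by omega)
      exact_mod_cast congrArg (fun z : ℤ => (z : ℝ)) e0
    rw [e1, e2]
    linarith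

private lemma part1 : ∀ d : Fin 3 → ℝ, (∀ j, 0 < d j) →
    ∃ c : ℝ → Fin 3, ∀ j : Fin 3, ∀ x y : ℝ,
      x ≠ y → c x = j → c y = j → |x - y| ≠ d j := by
  intro d hd
  by_cases h01 : ∀ p q : ℤ, p • d 0 + q • d 1 = 0 → p = 0 ∧ q = 0
  · exact pair_to_full d hd 0 1 (by decide) h01
  by_cases h02 : ∀ p q : ℤ, p • d 0 + q • d 2 = 0 → p = 0 ∧ q = 0
  · exact pair_to_full d hd 0 2 (by decide) h02
  obtain ⟨P₁, Q₁, hP₁, hQ₁, hc1⟩ := comm_extract (d 0) (d 1) (hd 0) (hd 1) h01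
  obtain ⟨P₂, Q₂, hP₂, hQ₂, hc2⟩ := comm_extract (d 0) (d 2) (hd 0) (hd 2) h02
  have hP₁R : (0 : ℝ) < P₁ := by exact_mod_cast hP₁
  have hP₂R : (0 : ℝ) < P₂ := by exact_mod_cast hP₂
  have hupos : 0 < d 0 / ((P₁ : ℝ) * (P₂ : ℝ)) := div_pos (hd 0) (by positivity)
  refine lift_coloring d _ hupos ![P₁ * P₂, Q₁ * P₂, Q₂ * P₁] ?_
    (int_coloring _ ?_)
  · intro j
    fin_cases j
    · show d 0 = ((P₁ * P₂ : ℕ) : ℝ) * (d 0 / ((P₁ : ℝ) * (P₂ : ℝ)))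
      push_cast
      field_simp
    · show d 1 = ((Q₁ * P₂ : ℕ) : ℝ) * (d 0 / ((P₁ : ℝ) * (P₂ : ℝ)))
      push_cast
      field_simp
      linear_combination hc1
    · show d 2 = ((Q₂ * P₁ : ℕ) : ℝ) * (d 0 / ((P₁ : ℝ) * (P₂ : ℝ)))
      push_cast
      field_simp
      linear_combination hc2
  · intro j
    fin_cases j
    · show 0 < P₁ * P₂
      exact Nat.mul_pos hP₁ hP₂
    · show 0 < Q₁ * P₂
      exact Nat.mul_pos hQ₁ hP₂
    · show 0 < Q₂ * P₁
      exact Nat.mul_pos hQ₂ hP₁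


private lemma fin2_cases (a : Fin 2) : a = 0 ∨ a = 1 := by
  fin_cases a
  · exact Or.inl rfl
  · exact Or.inr rfl

private lemma part2 : (∃ d : Fin 2 → ℝ, (∀ j, 0 < d j) ∧
      ¬ ∃ c : ℝ → Fin 2, ∀ j : Fin 2, ∀ x y : ℝ,
        x ≠ y → c x = j → c y = j → |x - y| ≠ d j) := by
  refine ⟨![1, 2], ⟨by intro j; fin_cases j <;> norm_num, ?_⟩⟩
  rintro ⟨c, hc⟩
  have key0 : ∀ x : ℝ, c x = 0 → c (x + 1) ≠ 0 := by
    intro x h0 h1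
    have := hc 0 x (x + 1) (by linarith) h0 h1
    apply this
    have : x - (x + 1) = -1 := by ring
    rw [this]
    norm_num
  have key1 : ∀ x : ℝ, c x = 1 → c (x + 2) ≠ 1 := by
    intro x h0 h1
    have := hc 1 x (x + 2) (by linarith) h0 h1
    apply this
    have : x - (x + 2) = -2 := by ring
    rw [this]
    norm_num
  have flip : ∀ x : ℝ, c (x + 1) ≠ c x := by
    intro x h
    rcases fin2_cases (c x) with h0 | h1
    · exact key0 x h0 (h.trans h0)
    · have hx1 : c (x + 1) = 1 := h.trans h1
      have e2 : c (x + 2) = 0 := by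
        rcases fin2_cases (c (x + 2)) with h' | h'
        · exact h'
        · exact absurd h' (key1 x h1)
      have e3 : c (x + 3) = 0 := by
        rcases fin2_cases (c (x + 3)) with h' | h'
        · exact h'
        · exact absurd (by rw [show x + 1 + 2 = x + 3 by ring]; exact h') (key1 (x + 1) hx1)
      exact key0 (x + 2) e2 (by rw [show x + 2 + 1 = x + 3 by ring]; exact e3)
  have hex : ∃ x : ℝ, c x = 1 := by
    rcases fin2_cases (c 0) with h0 | h1
    · refine ⟨0 + 1, ?_⟩
      rcases fin2_cases (c (0 + 1)) with h' | h'
      · exact absurd h' (key0 0 h0)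
      · exact h'
    · exact ⟨0, h1⟩
  obtain ⟨x, hx⟩ := hex
  have h1 : c (x + 1) = 0 := by
    rcases fin2_cases (c (x + 1)) with h' | h'
    · exact h'
    · exact absurd (h'.trans hx.symm) (flip x)
  have h2 : c (x + 2) = 1 := by
    rcases fin2_cases (c (x + 1 + 1)) with h' | h'
    · exact absurd (h'.trans h1.symm) (flip (x + 1))
    · rw [show x + 1 + 1 = x + 2 by ring] at h'
      exact h'
  exact key1 x hx h2


/-- The upper chromatic number of ℝ equals 3: every 1×3 restriction array admits
a D-coloring, but some 1×2 restriction array admits none. -/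
theorem upper_chromatic_real_eq_three :
    (∀ d : Fin 3 → ℝ, (∀ j, 0 < d j) →
      ∃ c : ℝ → Fin 3, ∀ j : Fin 3, ∀ x y : ℝ,
        x ≠ y → c x = j → c y = j → |x - y| ≠ d j) ∧
    (∃ d : Fin 2 → ℝ, (∀ j, 0 < d j) ∧
      ¬ ∃ c : ℝ → Fin 2, ∀ j : Fin 2, ∀ x y : ℝ,
        x ≠ y → c x = j → c y = j → |x - y| ≠ d j) := by
  exact ⟨part1, part2⟩
end

section
/- If S ⊆ ℝⁿ is a finite set with |S| = b such that the set of pairwise distances among distinct points of S has at most k elements, then the k-th upper chromatic number of ℝⁿ is at least b: there exists a k×(b−1) restriction array D of positive reals such that ℝⁿ admits no D-coloring with b−1 colors. -/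
/-- If S ⊆ ℝⁿ is finite of size b with at most k distinct pairwise distances,
then there is a k×(b−1) restriction array admitting no D-coloring of ℝⁿ;
hence χ̂⁽ᵏ⁾(ℝⁿ) ≥ b. -/
theorem kth_upper_chromatic_lower_bound (n k b : ℕ)
    (S : Set (EuclideanSpace ℝ (Fin n))) (hfin : S.Finite) (hcard : S.ncard = b)
    (hdist : ({d : ℝ | ∃ x ∈ S, ∃ y ∈ S, x ≠ y ∧ d = dist x y}).ncard ≤ k) :
    ∃ D : Fin k → Fin (b - 1) → ℝ, (∀ i j, 0 < D i j) ∧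
      ¬ ∃ c : EuclideanSpace ℝ (Fin n) → Fin (b - 1),
        ∀ (i : Fin k) (j : Fin (b - 1)) (x y : EuclideanSpace ℝ (Fin n)),
          x ≠ y → c x = j → c y = j → dist x y ≠ D i j := by
  classical
  set T := {d : ℝ | ∃ x ∈ S, ∃ y ∈ S, x ≠ y ∧ d = dist x y} with hT
  have hTfin : T.Finite := by
    apply (hfin.image2 dist hfin).subset
    rintro d ⟨x, hx, y, hy, -, rfl⟩
    exact ⟨x, hx, y, hy, rfl⟩
  set t := hTfin.toFinset with ht
  have htcard : t.card ≤ k := by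
    rwa [Set.ncard_eq_toFinset_card T hTfin] at hdist
  set L := t.toList ++ List.replicate (k - t.card) 1 with hLdef
  have hL : L.length = k := by
    simp [hLdef, Nat.add_sub_cancel' htcard]
  have hpos : ∀ d ∈ L, (0 : ℝ) < d := by
    intro d hd
    rcases List.mem_append.mp hd with h | h
    · have : d ∈ T := by rwa [← hTfin.mem_toFinset, ← Finset.mem_toList]
      obtain ⟨x, _, y, _, hxy, rfl⟩ := this
      exact dist_pos.mpr hxy
    · rw [List.eq_of_mem_replicate h]; norm_num
  refine ⟨fun i _ => L.get ⟨i, by rw [hL]; exact i.isLt⟩, ?_, ?_⟩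
  · intro i j
    exact hpos _ (List.get_mem L _)
  · rintro ⟨c, hc⟩
    by_cases hb : b - 1 = 0
    · exact Fin.elim0 (Fin.cast hb (c 0))
    · have hlt : (Finset.univ : Finset (Fin (b - 1))).card < hfin.toFinset.card := by
        rw [Finset.card_univ, Fintype.card_fin, ← Set.ncard_eq_toFinset_card S hfin, hcard]
        omega
      obtain ⟨x, hx, y, hy, hxy, hcxy⟩ :=
        Finset.exists_ne_map_eq_of_card_lt_of_maps_to hlt (fun a _ => Finset.mem_univ (c a))
      rw [Set.Finite.mem_toFinset] at hx hy
      have hd : dist x y ∈ T := ⟨x, hx, y, hy, hxy, rfl⟩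
      have hmem : dist x y ∈ L :=
        List.mem_append.mpr (Or.inl ((Finset.mem_toList).mpr (hTfin.mem_toFinset.mpr hd)))
      obtain ⟨i0, hi0⟩ := List.mem_iff_get.mp hmem
      have hik : (i0 : ℕ) < k := by rw [← hL]; exact i0.isLt
      exact hc ⟨i0, hik⟩ (c x) x y hxy rfl hcxy.symm hi0.symm
end

section
/- For every k ≥ 1, the k-th upper chromatic number of ℝ is greater than k: there exists a k×k restriction array D such that ℝ has no D-coloring with k colors. -/
/-- For every k ≥ 1 there is a k×k restriction array D such that ℝ admits no
D-coloring with k colors; hence χ̂⁽ᵏ⁾(ℝ) > k. -/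
theorem kth_upper_chromatic_real_gt_k (k : ℕ) (hk : 1 ≤ k) :
    ∃ D : Fin k → Fin k → ℝ, (∀ i j, 0 < D i j) ∧
      ¬ ∃ c : ℝ → Fin k, ∀ (i j : Fin k) (x y : ℝ),
        x ≠ y → c x = j → c y = j → |x - y| ≠ D i j := by
  refine ⟨fun i _ => (i : ℝ) + 1, fun i j => by positivity, ?_⟩
  rintro ⟨c, hc⟩
  obtain ⟨a, b, hab, heq⟩ := Fintype.exists_ne_map_eq_of_card_lt
    (fun t : Fin (k + 1) => c ((t : ℕ) : ℝ)) (by simp)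
  wlog hlt : (a : ℕ) < (b : ℕ) generalizing a b
  · exact this b a hab.symm heq.symm
      (lt_of_le_of_ne (le_of_not_gt hlt) (fun h => hab (Fin.ext h.symm)))
  have hble : (b : ℕ) ≤ k := Nat.lt_succ_iff.mp b.isLt
  have hne : ((a : ℕ) : ℝ) ≠ ((b : ℕ) : ℝ) := by
    exact_mod_cast Nat.ne_of_lt hlt
  refine hc ⟨(b : ℕ) - (a : ℕ) - 1, by omega⟩ (c ((a : ℕ) : ℝ))
    ((a : ℕ) : ℝ) ((b : ℕ) : ℝ) hne rfl heq.symm ?_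
  simp only [Fin.val_mk]
  rw [abs_sub_comm, abs_of_nonneg (sub_nonneg.mpr (by exact_mod_cast hlt.le))]
  push_cast [Nat.sub_sub]
  have : (1 : ℕ) ≤ (b : ℕ) - (a : ℕ) := by omega
  rw [Nat.cast_sub (by omega : (a : ℕ) + 1 ≤ (b : ℕ))]
  push_cast
  ring
end

section
/- The vertices of a regular (2k+1)-gon in the Euclidean plane form a k-distance set: the number of distinct pairwise distances among the 2k+1 vertices equals k. -/
lemma dist_cos_sin (a b : ℝ) (x y : EuclideanSpace ℝ (Fin 2))
    (hx : x = ![Real.cos a, Real.sin a]) (hy : y = ![Real.cos b, Real.sin b]) :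
    dist x y = 2 * |Real.sin ((a - b) / 2)| := by
  rw [EuclideanSpace.dist_eq]
  have key : ∑ i : Fin 2, dist (x i) (y i) ^ 2 = (2 * |Real.sin ((a - b) / 2)|) ^ 2 := by
    have h1 := Real.sin_sq_add_cos_sq ((a - b) / 2)
    have h2 := Real.cos_two_mul ((a - b) / 2)
    have h3 : 2 * ((a - b) / 2) = a - b := by ring
    rw [h3] at h2
    have h4 := Real.cos_sub a b
    simp [Fin.sum_univ_two, hx, hy, Real.dist_eq, mul_pow, sq_abs]
    nlinarith [Real.sin_sq_add_cos_sq a, Real.sin_sq_add_cos_sq b]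
  rw [key, Real.sqrt_sq (by positivity)]

/-- The vertices of a regular (2k+1)-gon form a k-distance set: the set of
pairwise distances between distinct vertices has exactly k elements. -/
theorem regular_odd_gon_k_distance_set (k : ℕ) (hk : 1 ≤ k)
    (v : Fin (2 * k + 1) → EuclideanSpace ℝ (Fin 2))
    (hv : ∀ j, v j = ![Real.cos (2 * Real.pi * j / (2 * k + 1)),
                       Real.sin (2 * Real.pi * j / (2 * k + 1))]) :
    ({d : ℝ | ∃ i j : Fin (2 * k + 1), i ≠ j ∧ d = dist (v i) (v j)}).ncard = k := by
  have hN : (0:ℝ) < 2 * k + 1 := by positivity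
  have pi_pos := Real.pi_pos
  -- distance formula
  have hd : ∀ i j : Fin (2 * k + 1),
      dist (v i) (v j) = 2 * |Real.sin (Real.pi * ((i:ℝ) - (j:ℝ)) / (2 * k + 1))| := by
    intro i j
    rw [dist_cos_sin (2 * Real.pi * i / (2 * k + 1)) (2 * Real.pi * j / (2 * k + 1))
      (v i) (v j) (hv i) (hv j)]
    have he : (2 * Real.pi * (i:ℝ) / (2 * k + 1) - 2 * Real.pi * (j:ℝ) / (2 * k + 1)) / 2
        = Real.pi * ((i:ℝ) - (j:ℝ)) / (2 * k + 1) := by field_simp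
    rw [he]
  -- positivity of sin for m in [1, 2k]
  have hsinpos : ∀ m : ℕ, 1 ≤ m → m ≤ 2 * k →
      0 < Real.sin (Real.pi * m / (2 * k + 1)) := by
    intro m h1 h2
    apply Real.sin_pos_of_pos_of_lt_pi
    · positivity
    · rw [div_lt_iff₀ hN]
      have : (m:ℝ) < 2 * k + 1 := by exact_mod_cast by omega
      nlinarith
  set f : ℕ → ℝ := fun m => 2 * Real.sin (Real.pi * m / (2 * k + 1)) with hf
  have hset : {d : ℝ | ∃ i j : Fin (2 * k + 1), i ≠ j ∧ d = dist (v i) (v j)}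
      = f '' (Set.Icc 1 k) := by
    ext d
    simp only [Set.mem_setOf_eq, Set.mem_image, Set.mem_Icc]
    constructor
    · rintro ⟨i, j, hij, rfl⟩
      -- reduce to the case j < i
      wlog hji : (j:ℕ) < (i:ℕ) generalizing i j with H
      · have : (i:ℕ) < (j:ℕ) := by
          rcases lt_trichotomy (i:ℕ) (j:ℕ) with h | h | h
          · exact h
          · exact absurd (Fin.ext h) hij
          · exact absurd h hji
        rw [dist_comm]
        exact H j i hij.symm this
      set a : ℕ := (i:ℕ) - (j:ℕ) with ha
      have ha1 : 1 ≤ a := by omega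
      have ha2 : a ≤ 2 * k := by have := i.isLt; omega
      have hcast : ((i:ℕ):ℝ) - ((j:ℕ):ℝ) = (a:ℝ) := by
        have : (j:ℕ) ≤ (i:ℕ) := le_of_lt hji
        push_cast [ha, Nat.cast_sub this]
        ring
      rw [hd i j, hcast]
      rcases le_or_gt a k with hak | hak
      · exact ⟨a, ⟨ha1, hak⟩, by
          rw [abs_of_pos (hsinpos a ha1 ha2)]⟩
      · refine ⟨2 * k + 1 - a, ⟨by omega, by omega⟩, ?_⟩
        have hsub : ((2 * k + 1 - a : ℕ) : ℝ) = (2 * k + 1 : ℝ) - a := by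
          have : a ≤ 2 * k + 1 := by omega
          push_cast [Nat.cast_sub this]
          ring
        rw [hf]
        simp only
        rw [hsub, abs_of_pos (hsinpos a ha1 ha2)]
        congr 1
        rw [← Real.sin_pi_sub]
        congr 1
        field_simp
        ring
    · rintro ⟨m, ⟨hm1, hm2⟩, rfl⟩
      refine ⟨⟨m, by omega⟩, ⟨0, by omega⟩, Fin.ne_of_val_ne (by simp; omega), ?_⟩
      · rw [hd]
        simp only [Fin.val_mk, Nat.cast_zero, sub_zero]
        rw [hf]
        simp only
        rw [abs_of_pos (hsinpos m hm1 (by omega))]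
  rw [hset]
  have hinj : Set.InjOn f (Set.Icc 1 k) := by
    intro m hm m' hm' hmm
    simp only [Set.mem_Icc] at hm hm'
    have key : ∀ p : ℕ, 1 ≤ p → p ≤ k → Real.pi * p / (2 * k + 1) ∈
        Set.Icc (-(Real.pi/2)) (Real.pi/2) := by
      intro p h1 h2
      constructor
      · have : (0:ℝ) ≤ Real.pi * p / (2 * k + 1) := by positivity
        linarith
      · rw [div_le_iff₀ hN]
        have : (p:ℝ) ≤ k := by exact_mod_cast h2
        nlinarith
    have h2 : Real.sin (Real.pi * m / (2 * k + 1)) = Real.sin (Real.pi * m' / (2 * k + 1)) := by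
      have := congrArg (· / 2) hmm
      simp only [hf] at this
      field_simp at this
      linarith [this]
    have h4 := Real.strictMonoOn_sin.injOn (key m hm.1 hm.2) (key m' hm'.1 hm'.2) h2
    field_simp at h4
    exact_mod_cast h4
  rw [Set.ncard_image_of_injOn hinj]
  rw [← Finset.coe_Icc, Set.ncard_coe_finset, Nat.card_Icc]
  omega
end

section
/- The 5-cycle C₅ (equivalently, the vertex set of a regular pentagon with the two pentagon distances) cannot be 2-colored so that color 1 avoids the side length and color 2 avoids the diagonal length; hence χ̂^(1)(ℝ²) > 2 via a 1-distance-per-color restriction at distances equal to the side and diagonal of a regular pentagon. -/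
lemma pent_key (a b : ℝ) :
    dist (WithLp.toLp 2 ![Real.cos a, Real.sin a] : EuclideanSpace ℝ (Fin 2))
      (WithLp.toLp 2 ![Real.cos b, Real.sin b]) = Real.sqrt (2 - 2 * Real.cos (a - b)) := by
  rw [EuclideanSpace.dist_eq]
  congr 1
  simp [Fin.sum_univ_two, Real.dist_eq, Real.cos_sub]
  have ha := Real.sin_sq_add_cos_sq a
  have hb := Real.sin_sq_add_cos_sq b
  nlinarith [sq_abs (Real.cos a - Real.cos b), sq_abs (Real.sin a - Real.sin b)]

lemma pent_coseq (x y : ℝ) (h : x = y ∨ x = -y - 2 * Real.pi) :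
    Real.cos x = Real.cos y := by
  rcases h with h | h
  · rw [h]
  · rw [h, show -y - 2 * Real.pi = -(y + 2 * Real.pi) by ring, Real.cos_neg,
      Real.cos_add_two_pi]

/-- The vertices of a regular pentagon cannot be 2-colored so that color 0 avoids
the side length and color 1 avoids the diagonal length; hence χ̂(ℝ²) > 2. -/
theorem pentagon_no_two_coloring
    (v : Fin 5 → EuclideanSpace ℝ (Fin 2))
    (hv : ∀ i, v i = ![Real.cos (2 * Real.pi * i / 5), Real.sin (2 * Real.pi * i / 5)])
    (s t : ℝ) (hs : s = dist (v 0) (v 1)) (ht : t = dist (v 0) (v 2)) :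
    ¬ ∃ c : Fin 5 → Fin 2,
      (∀ i j : Fin 5, i ≠ j → c i = 0 → c j = 0 → dist (v i) (v j) ≠ s) ∧
      (∀ i j : Fin 5, i ≠ j → c i = 1 → c j = 1 → dist (v i) (v j) ≠ t) := by
  rintro ⟨c, hA, hB⟩
  have hv' : ∀ i, v i = WithLp.toLp 2
      ![Real.cos (2 * Real.pi * i / 5), Real.sin (2 * Real.pi * i / 5)] := fun i => by
    rw [← hv i]
  have d01 : dist (v 0) (v 1) = s := hs.symm
  have d02 : dist (v 0) (v 2) = t := ht.symm
  have k01 : dist (v 0) (v 1) = Real.sqrt (2 - 2 * Real.cos (2*Real.pi*0/5 - 2*Real.pi*1/5)) := by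
    rw [hv', hv', pent_key]
    norm_num [show ((3 : Fin 5) : ℕ) = 3 from rfl, show ((4 : Fin 5) : ℕ) = 4 from rfl]
  have k02 : dist (v 0) (v 2) = Real.sqrt (2 - 2 * Real.cos (2*Real.pi*0/5 - 2*Real.pi*2/5)) := by
    rw [hv', hv', pent_key]
    norm_num [show ((3 : Fin 5) : ℕ) = 3 from rfl, show ((4 : Fin 5) : ℕ) = 4 from rfl]
  have k12 : dist (v 1) (v 2) = Real.sqrt (2 - 2 * Real.cos (2*Real.pi*1/5 - 2*Real.pi*2/5)) := by
    rw [hv', hv', pent_key]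
    norm_num [show ((3 : Fin 5) : ℕ) = 3 from rfl, show ((4 : Fin 5) : ℕ) = 4 from rfl]
  have d12 : dist (v 1) (v 2) = s := by
    rw [k12, hs, k01,
      pent_coseq (2*Real.pi*1/5 - 2*Real.pi*2/5) (2*Real.pi*0/5 - 2*Real.pi*1/5) (Or.inl (by ring))]
  have k23 : dist (v 2) (v 3) = Real.sqrt (2 - 2 * Real.cos (2*Real.pi*2/5 - 2*Real.pi*3/5)) := by
    rw [hv', hv', pent_key]
    norm_num [show ((3 : Fin 5) : ℕ) = 3 from rfl, show ((4 : Fin 5) : ℕ) = 4 from rfl]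
  have d23 : dist (v 2) (v 3) = s := by
    rw [k23, hs, k01,
      pent_coseq (2*Real.pi*2/5 - 2*Real.pi*3/5) (2*Real.pi*0/5 - 2*Real.pi*1/5) (Or.inl (by ring))]
  have k34 : dist (v 3) (v 4) = Real.sqrt (2 - 2 * Real.cos (2*Real.pi*3/5 - 2*Real.pi*4/5)) := by
    rw [hv', hv', pent_key]
    norm_num [show ((3 : Fin 5) : ℕ) = 3 from rfl, show ((4 : Fin 5) : ℕ) = 4 from rfl]
  have d34 : dist (v 3) (v 4) = s := by
    rw [k34, hs, k01,
      pent_coseq (2*Real.pi*3/5 - 2*Real.pi*4/5) (2*Real.pi*0/5 - 2*Real.pi*1/5) (Or.inl (by ring))]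
  have k04 : dist (v 0) (v 4) = Real.sqrt (2 - 2 * Real.cos (2*Real.pi*0/5 - 2*Real.pi*4/5)) := by
    rw [hv', hv', pent_key]
    norm_num [show ((3 : Fin 5) : ℕ) = 3 from rfl, show ((4 : Fin 5) : ℕ) = 4 from rfl]
  have d04 : dist (v 0) (v 4) = s := by
    rw [k04, hs, k01,
      pent_coseq (2*Real.pi*0/5 - 2*Real.pi*4/5) (2*Real.pi*0/5 - 2*Real.pi*1/5) (Or.inr (by ring))]
  have k13 : dist (v 1) (v 3) = Real.sqrt (2 - 2 * Real.cos (2*Real.pi*1/5 - 2*Real.pi*3/5)) := by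
    rw [hv', hv', pent_key]
    norm_num [show ((3 : Fin 5) : ℕ) = 3 from rfl, show ((4 : Fin 5) : ℕ) = 4 from rfl]
  have d13 : dist (v 1) (v 3) = t := by
    rw [k13, ht, k02,
      pent_coseq (2*Real.pi*1/5 - 2*Real.pi*3/5) (2*Real.pi*0/5 - 2*Real.pi*2/5) (Or.inl (by ring))]
  have k24 : dist (v 2) (v 4) = Real.sqrt (2 - 2 * Real.cos (2*Real.pi*2/5 - 2*Real.pi*4/5)) := by
    rw [hv', hv', pent_key]
    norm_num [show ((3 : Fin 5) : ℕ) = 3 from rfl, show ((4 : Fin 5) : ℕ) = 4 from rfl]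
  have d24 : dist (v 2) (v 4) = t := by
    rw [k24, ht, k02,
      pent_coseq (2*Real.pi*2/5 - 2*Real.pi*4/5) (2*Real.pi*0/5 - 2*Real.pi*2/5) (Or.inl (by ring))]
  have k03 : dist (v 0) (v 3) = Real.sqrt (2 - 2 * Real.cos (2*Real.pi*0/5 - 2*Real.pi*3/5)) := by
    rw [hv', hv', pent_key]
    norm_num [show ((3 : Fin 5) : ℕ) = 3 from rfl, show ((4 : Fin 5) : ℕ) = 4 from rfl]
  have d03 : dist (v 0) (v 3) = t := by
    rw [k03, ht, k02,
      pent_coseq (2*Real.pi*0/5 - 2*Real.pi*3/5) (2*Real.pi*0/5 - 2*Real.pi*2/5) (Or.inr (by ring))]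
  have k14 : dist (v 1) (v 4) = Real.sqrt (2 - 2 * Real.cos (2*Real.pi*1/5 - 2*Real.pi*4/5)) := by
    rw [hv', hv', pent_key]
    norm_num [show ((3 : Fin 5) : ℕ) = 3 from rfl, show ((4 : Fin 5) : ℕ) = 4 from rfl]
  have d14 : dist (v 1) (v 4) = t := by
    rw [k14, ht, k02,
      pent_coseq (2*Real.pi*1/5 - 2*Real.pi*4/5) (2*Real.pi*0/5 - 2*Real.pi*2/5) (Or.inr (by ring))]
  have h2 : ∀ i : Fin 5, c i = 0 ∨ c i = 1 := fun i => by omega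
  rcases h2 0 with c0|c0 <;> rcases h2 1 with c1|c1 <;> rcases h2 2 with c2|c2 <;>
    rcases h2 3 with c3|c3 <;> rcases h2 4 with c4|c4 <;>
  first
    | exact hA 0 1 (by decide) c0 c1 d01
    | exact hA 1 2 (by decide) c1 c2 d12
    | exact hA 2 3 (by decide) c2 c3 d23
    | exact hA 3 4 (by decide) c3 c4 d34
    | exact hA 0 4 (by decide) c0 c4 d04
    | exact hB 0 2 (by decide) c0 c2 d02
    | exact hB 1 3 (by decide) c1 c3 d13
    | exact hB 2 4 (by decide) c2 c4 d24
    | exact hB 0 3 (by decide) c0 c3 d03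
    | exact hB 1 4 (by decide) c1 c4 d14
end
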